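/- arXiv:1308.2368 — 7 statements merged into one kernel-verified Lean document; each statement's English description precedes it below -/
import Mathlib

section
/- A graph G satisfies box(G) ≤ k if and only if there exists a family of k cointerval spanning subgraphs of the complement of G whose edge sets together cover all edges of the complement of G. -/
open SimpleGraph

/-- `G` has a representation by axis-parallel boxes in `ℝ^k`: distinct vertices are
adjacent iff their boxes intersect. -/
def HasBoxRep {V : Type*} (G : SimpleGraph V) (k : ℕ) : Prop :=
  ∃ lo hi : V → Fin k → ℝ,
    ∀ u v : V, u ≠ v →
      (G.Adj u v ↔ ∀ i, max (lo u i) (lo v i) ≤ min (hi u i) (hi v i))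

/-- The boxicity of a graph: the least `k` such that `G` has a box representation
in `ℝ^k` (0 for complete graphs). -/
noncomputable def boxicity {V : Type*} (G : SimpleGraph V) : ℕ :=
  sInf {k | HasBoxRep G k}

/-- An interval graph: an intersection graph of closed intervals on the real line. -/
def IsIntervalGraph {V : Type*} (G : SimpleGraph V) : Prop := HasBoxRep G 1

/-- A cointerval graph: the complement is an interval graph. -/
def Cointerval {V : Type*} (G : SimpleGraph V) : Prop := IsIntervalGraph Gᶜ

/-- The generalized Mycielski graph `M_r(G)`: vertex `none` is the apex `z`,
`some (v, i)` is the copy `v_{i+1}` of `v` in level `i`.  Level `0` induces a copy of `G`,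
consecutive levels are joined by `u_{i-1}v_i, v_{i-1}u_i` for `uv ∈ E(G)`, and `z`
is joined to all vertices of the top level `r-1`. -/
def genMycielski {V : Type*} (G : SimpleGraph V) (r : ℕ) :
    SimpleGraph (Option (V × Fin r)) :=
  SimpleGraph.fromRel (fun a b =>
    match a, b with
    | some (u, i), some (v, j) =>
        (i = j ∧ (i : ℕ) = 0 ∧ G.Adj u v) ∨ ((j : ℕ) = (i : ℕ) + 1 ∧ G.Adj u v)
    | some (_, i), none => (i : ℕ) = r - 1
    | none, _ => False)

/-- A focal (universal) vertex: adjacent to all other vertices. -/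
def IsFocal {V : Type*} (G : SimpleGraph V) (v : V) : Prop :=
  ∀ w, w ≠ v → G.Adj v w

/-- `G` with `n` additional universal vertices, i.e. the `n`-th focalization `G^{fⁿ}`. -/
def addUniversal {V : Type*} (G : SimpleGraph V) (n : ℕ) :
    SimpleGraph (V ⊕ Fin n) :=
  SimpleGraph.fromRel (fun a b =>
    match a, b with
    | Sum.inl u, Sum.inl v => G.Adj u v
    | _, _ => True)

/-- The edge clique cover number: the minimum number of cliques covering all edges. -/
noncomputable def edgeCliqueCoverNumber {V : Type*} (G : SimpleGraph V) : ℕ :=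
  sInf {k | ∃ f : Fin k → Set V, (∀ i, G.IsClique (f i)) ∧
    ∀ u v, G.Adj u v → ∃ i, u ∈ f i ∧ v ∈ f i}

/-- Disjoint union of two graphs. -/
def disjUnionGraph {α β : Type*} (G : SimpleGraph α) (H : SimpleGraph β) :
    SimpleGraph (α ⊕ β) :=
  SimpleGraph.fromRel (fun a b =>
    match a, b with
    | Sum.inl u, Sum.inl v => G.Adj u v
    | Sum.inr u, Sum.inr v => H.Adj u v
    | _, _ => False)

/-- The complete multipartite graph with parts `V i`. -/
def completeMultipartite {ι : Type*} (V : ι → Type*) : SimpleGraph (Σ i, V i) where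
  Adj a b := a.1 ≠ b.1
  symm := ⟨fun _ _ h => Ne.symm h⟩
  loopless := ⟨fun _ h => h rfl⟩

private def sliceGraph {V : Type*} (lo hi : V → ℝ) : SimpleGraph V where
  Adj u v := u ≠ v ∧ max (lo u) (lo v) ≤ min (hi u) (hi v)
  symm := ⟨by
    rintro u v ⟨h1, h2⟩
    exact ⟨h1.symm, by rwa [max_comm, min_comm]⟩⟩
  loopless := ⟨fun v h => h.1 rfl⟩

private lemma sliceGraph_isInterval {V : Type*} (lo hi : V → ℝ) :
    IsIntervalGraph (sliceGraph lo hi) := by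
  refine ⟨fun v _ => lo v, fun v _ => hi v, fun u v huv => ?_⟩
  constructor
  · intro h _; exact h.2
  · intro h; exact ⟨huv, h 0⟩

private lemma hasBoxRep_mono {V : Type*} (G : SimpleGraph V) {k m : ℕ} (h : k ≤ m) :
    HasBoxRep G k → HasBoxRep G m := by
  rintro ⟨lo, hi, H⟩
  refine ⟨fun v i => if h' : (i : ℕ) < k then lo v ⟨i, h'⟩ else 0,
          fun v i => if h' : (i : ℕ) < k then hi v ⟨i, h'⟩ else 1,
          fun u v huv => ?_⟩
  rw [H u v huv]
  constructor
  · intro H' i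
    by_cases h' : (i : ℕ) < k
    · simpa [h'] using H' ⟨i, h'⟩
    · simp [h']
  · intro H' i
    have := H' ⟨i, lt_of_lt_of_le i.2 h⟩
    simpa [i.2] using this

private lemma hasBoxRep_exists {V : Type*} [Fintype V] (G : SimpleGraph V) :
    HasBoxRep G (Fintype.card (V × V)) := by
  classical
  set e := (Fintype.equivFin (V × V)).symm with he
  refine ⟨fun v i => if v = (e i).2 ∧ ¬G.Adj (e i).1 (e i).2 ∧ (e i).1 ≠ (e i).2 then 2 else 0,
          fun v i => if v = (e i).1 ∧ ¬G.Adj (e i).1 (e i).2 ∧ (e i).1 ≠ (e i).2 then 0 else 2,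
          fun u v huv => ?_⟩
  constructor
  · intro hadj i
    have hsym : G.Adj v u := hadj.symm
    dsimp only
    split_ifs with h1 h2 h3 h4 <;> simp_all <;> norm_num
  · intro h
    by_contra hadj
    have hi := h (e.symm (u, v))
    dsimp only at hi
    rw [Equiv.apply_symm_apply] at hi
    simp only [huv, huv.symm, hadj] at hi
    simp [huv] at hi
    norm_num at hi

/-- Cozzens–Roberts: `box(G) ≤ k` iff `Gᶜ` has a cointerval edge
covering by `k` spanning subgraphs. -/
theorem boxicity_le_iff_cointerval_cover {V : Type*} [Fintype V]
    (G : SimpleGraph V) (k : ℕ) :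
    boxicity G ≤ k ↔
      ∃ f : Fin k → SimpleGraph V,
        (∀ i, f i ≤ Gᶜ) ∧ (∀ i, Cointerval (f i)) ∧
        (∀ u v, Gᶜ.Adj u v → ∃ i, (f i).Adj u v) := by
  classical
  constructor
  · intro hle
    have hne : {k | HasBoxRep G k}.Nonempty := ⟨_, hasBoxRep_exists G⟩
    have hmem : HasBoxRep G (boxicity G) := Nat.sInf_mem hne
    obtain ⟨lo, hi, H⟩ := hasBoxRep_mono G hle hmem
    refine ⟨fun i => (sliceGraph (fun v => lo v i) (fun v => hi v i))ᶜ, ?_, ?_, ?_⟩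
    · intro i u v h
      rw [compl_adj] at h ⊢
      exact ⟨h.1, fun hadj => h.2 ⟨h.1, (H u v h.1).mp hadj i⟩⟩
    · intro i
      show IsIntervalGraph _ᶜ
      rw [compl_compl]
      exact sliceGraph_isInterval _ _
    · intro u v h
      rw [compl_adj] at h
      by_contra hc
      push_neg at hc
      apply h.2
      rw [H u v h.1]
      intro i
      have hci := hc i
      rw [compl_adj] at hci
      push_neg at hci
      exact (hci h.1).2
  · rintro ⟨f, hf, hco, hcov⟩
    have hco' : ∀ i, HasBoxRep (f i)ᶜ 1 := hco
    choose lo hi H using hco'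
    have hrep : HasBoxRep G k := by
      refine ⟨fun v i => lo i v 0, fun v i => hi i v 0, fun u v huv => ?_⟩
      constructor
      · intro hadj i
        have h1 : (f i)ᶜ.Adj u v := by
          rw [compl_adj]
          refine ⟨huv, fun hfi => ?_⟩
          exact ((compl_adj G u v).mp (hf i hfi)).2 hadj
        exact (H i u v huv).mp h1 0
      · intro hI
        by_contra hadj
        obtain ⟨i, hfi⟩ := hcov u v ((compl_adj G u v).mpr ⟨huv, hadj⟩)
        have h1 : (f i)ᶜ.Adj u v :=
          (H i u v huv).mpr (fun j => by rw [Subsingleton.elim j 0]; exact hI i)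
        exact ((compl_adj (f i) u v).mp h1).2 hfi
    exact Nat.sInf_le hrep
end

section
/- Let G be a graph and let H_1, H_2 be induced subgraphs of the complement of G. If the distance between H_1 and H_2 in the complement of G is at least 2 (i.e., no vertex of H_1 is equal or adjacent in the complement to a vertex of H_2), then box(G) ≥ box(complement of H_1) + box(complement of H_2). -/
open SimpleGraph

lemma hasBoxRep_card {V : Type*} [Fintype V] (G : SimpleGraph V) :
    HasBoxRep G (Fintype.card V) := by
  classical
  set e : Fin (Fintype.card V) ≃ V := (Fintype.equivFin V).symm with he
  refine ⟨fun v i => if v = e i then 1 else 0,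
          fun v i => if v = e i then 1 else if G.Adj v (e i) then 2 else 0, ?_⟩
  intro u v huv
  constructor
  · intro hadj i
    by_cases hu : u = e i
    · have hv : v ≠ e i := fun hv => huv (hu.trans hv.symm)
      have hav : G.Adj v (e i) := hu ▸ hadj.symm
      simp [hu, hv, hav]
    · by_cases hv : v = e i
      · have hau : G.Adj u (e i) := hv ▸ hadj
        simp [hu, hv, hau]
      · simp only [if_neg hu, if_neg hv]
        have h1 : (0:ℝ) ≤ if G.Adj u (e i) then 2 else 0 := by positivity
        have h2 : (0:ℝ) ≤ if G.Adj v (e i) then 2 else 0 := by positivity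
        simp [le_min_iff, h1, h2]
  · intro hall
    by_contra hadj
    have := hall ((Fintype.equivFin V) u)
    have heu : e ((Fintype.equivFin V) u) = u := by simp [he]
    simp only [heu] at this
    have hvu : v ≠ u := fun hvu => huv hvu.symm
    have hav : ¬ G.Adj v u := fun hav => hadj hav.symm
    simp only [if_pos rfl, if_neg hvu, if_neg hav] at this
    norm_num at this

lemma interval_lemma (a A b B c C d D : ℝ)
    (h1 : ¬(max a b ≤ min A B)) (h2 : ¬(max c d ≤ min C D))
    (hac : max a c ≤ min A C) (had : max a d ≤ min A D)
    (hbc : max b c ≤ min B C) (hbd : max b d ≤ min B D) : False := by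
  simp only [max_le_iff, le_min_iff] at hac had hbc hbd
  have h1' : min A B < max a b := not_le.mp h1
  have h2' : min C D < max c d := not_le.mp h2
  rcases lt_max_iff.mp h1' with h1a | h1b
  · rcases min_lt_iff.mp h1a with hA | hB
    · rcases lt_max_iff.mp h2' with h2c | h2d <;>
        rcases min_lt_iff.mp (by assumption : min C D < _) with _ | _ <;> linarith [hac.1.1]
    · rcases lt_max_iff.mp h2' with h2c | h2d <;>
        rcases min_lt_iff.mp (by assumption : min C D < _) with _ | _ <;>
          linarith [hac.1.1, hac.1.2, hac.2.1, hac.2.2, had.1.1, had.1.2, had.2.1, had.2.2,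
            hbc.1.1, hbc.1.2, hbc.2.1, hbc.2.2, hbd.1.1, hbd.1.2, hbd.2.1, hbd.2.2]
  · rcases min_lt_iff.mp h1b with hA | hB
    · rcases lt_max_iff.mp h2' with h2c | h2d <;>
        rcases min_lt_iff.mp (by assumption : min C D < _) with _ | _ <;>
          linarith [hac.1.1, hac.1.2, hac.2.1, hac.2.2, had.1.1, had.1.2, had.2.1, had.2.2,
            hbc.1.1, hbc.1.2, hbc.2.1, hbc.2.2, hbd.1.1, hbd.1.2, hbd.2.1, hbd.2.2]
    · linarith [hbc.1.2]

lemma hasBoxRep_induce_of_subset {V : Type*} (G : SimpleGraph V) (S : Set V)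
    {k : ℕ} (lo hi : V → Fin k → ℝ)
    (hrep : ∀ u v : V, u ≠ v →
      (G.Adj u v ↔ ∀ i, max (lo u i) (lo v i) ≤ min (hi u i) (hi v i)))
    (A : Finset (Fin k))
    (hA : ∀ u v : V, u ∈ S → v ∈ S → u ≠ v → ¬ G.Adj u v →
      ∃ i ∈ A, ¬ (max (lo u i) (lo v i) ≤ min (hi u i) (hi v i))) :
    HasBoxRep (G.induce S) A.card := by
  refine ⟨fun v j => lo v (A.equivFin.symm j), fun v j => hi v (A.equivFin.symm j), ?_⟩
  intro u v huv
  have hne : (u : V) ≠ v := Subtype.coe_injective.ne huv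
  constructor
  · intro hadj j
    exact (hrep u v hne).mp hadj _
  · intro hall
    by_contra hadj
    obtain ⟨i, hiA, hbad⟩ := hA u v u.2 v.2 hne hadj
    exact hbad (by simpa using hall (A.equivFin ⟨i, hiA⟩))

lemma compl_induce_compl {V : Type*} (G : SimpleGraph V) (S : Set V) :
    ((Gᶜ.induce S)ᶜ : SimpleGraph S) = G.induce S := by
  ext u v
  show u ≠ v ∧ ¬((u : V) ≠ (v : V) ∧ ¬G.Adj u v) ↔ G.Adj (u : V) (v : V)
  constructor
  · rintro ⟨huv, hc⟩
    by_contra hg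
    exact hc ⟨Subtype.coe_ne_coe.mpr huv, hg⟩
  · intro hg
    exact ⟨Subtype.coe_ne_coe.mp hg.ne, fun hc => hc.2 hg⟩

/-- if the induced subgraphs of `Gᶜ` on `S1` and `S2` are at distance
at least 2 in `Gᶜ`, then `box(G) ≥ box(H₁ᶜ) + box(H₂ᶜ)`, where `Hᵢ = Gᶜ[Sᵢ]`. -/
theorem boxicity_ge_add_of_far_subgraphs {V : Type*} [Fintype V]
    (G : SimpleGraph V) (S1 S2 : Set V)
    (h : ∀ v1 ∈ S1, ∀ v2 ∈ S2, v1 ≠ v2 ∧ ¬ Gᶜ.Adj v1 v2) :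
    boxicity ((Gᶜ.induce S1)ᶜ) + boxicity ((Gᶜ.induce S2)ᶜ) ≤ boxicity G := by
  classical
  rw [compl_induce_compl, compl_induce_compl]
  have hnonempty : {k | HasBoxRep G k}.Nonempty := ⟨_, hasBoxRep_card G⟩
  obtain ⟨lo, hi, hrep⟩ : HasBoxRep G (boxicity G) := Nat.sInf_mem hnonempty
  have hadj : ∀ a ∈ S1, ∀ b ∈ S2, G.Adj a b := by
    intro a ha b hb
    obtain ⟨hab, hnc⟩ := h a ha b hb
    by_contra hg
    exact hnc (⟨hab, hg⟩ : Gᶜ.Adj a b)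
  set A : Finset (Fin (boxicity G)) := Finset.univ.filter (fun i => ∃ u v : V, u ∈ S1 ∧ v ∈ S1 ∧
    ¬ (max (lo u i) (lo v i) ≤ min (hi u i) (hi v i))) with hA
  set B : Finset (Fin (boxicity G)) := Finset.univ.filter (fun i => ∃ u v : V, u ∈ S2 ∧ v ∈ S2 ∧
    ¬ (max (lo u i) (lo v i) ≤ min (hi u i) (hi v i))) with hB
  have hdisj : Disjoint A B := by
    rw [Finset.disjoint_left]
    intro i hiA hiB
    rw [hA, Finset.mem_filter] at hiA
    rw [hB, Finset.mem_filter] at hiB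
    obtain ⟨u1, v1, hu1, hv1, h1⟩ := hiA.2
    obtain ⟨u2, v2, hu2, hv2, h2⟩ := hiB.2
    have c1 := (hrep u1 u2 (h u1 hu1 u2 hu2).1).mp (hadj u1 hu1 u2 hu2) i
    have c2 := (hrep u1 v2 (h u1 hu1 v2 hv2).1).mp (hadj u1 hu1 v2 hv2) i
    have c3 := (hrep v1 u2 (h v1 hv1 u2 hu2).1).mp (hadj v1 hv1 u2 hu2) i
    have c4 := (hrep v1 v2 (h v1 hv1 v2 hv2).1).mp (hadj v1 hv1 v2 hv2) i
    exact interval_lemma _ _ _ _ _ _ _ _ h1 h2 c1 c2 c3 c4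
  have hb1 : boxicity (G.induce S1) ≤ A.card := by
    apply Nat.sInf_le
    apply hasBoxRep_induce_of_subset G S1 lo hi hrep A
    intro u v hu hv huv hg
    obtain ⟨i, hbad⟩ := not_forall.mp (fun hall => hg ((hrep u v huv).mpr hall))
    refine ⟨i, ?_, hbad⟩
    rw [hA, Finset.mem_filter]
    exact ⟨Finset.mem_univ i, u, v, hu, hv, hbad⟩
  have hb2 : boxicity (G.induce S2) ≤ B.card := by
    apply Nat.sInf_le
    apply hasBoxRep_induce_of_subset G S2 lo hi hrep B
    intro u v hu hv huv hg
    obtain ⟨i, hbad⟩ := not_forall.mp (fun hall => hg ((hrep u v huv).mpr hall))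
    refine ⟨i, ?_, hbad⟩
    rw [hB, Finset.mem_filter]
    exact ⟨Finset.mem_univ i, u, v, hu, hv, hbad⟩
  have hcard : A.card + B.card ≤ boxicity G := by
    rw [← Finset.card_union_of_disjoint hdisj]
    simpa using Finset.card_le_univ (A ∪ B)
  omega
end

section
/- Let G be a graph and S_1 = {a_1,...,a_n}, S_2 = {b_1,...,b_n} be disjoint subsets of V(G) such that in the complement of G the only edges between S_1 and S_2 are the edges a_i b_i for i = 1,...,n. Then box(G) ≥ ⌈n/2⌉. -/
open SimpleGraph

/-- Every finite graph has a box representation in some dimension. -/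
lemma exists_hasBoxRep {V : Type*} [Fintype V] (G : SimpleGraph V) :
    ∃ k, HasBoxRep G k := by
  classical
  set S : Finset (V × V) :=
    Finset.univ.filter (fun p => p.1 ≠ p.2 ∧ ¬G.Adj p.1 p.2) with hS
  set e : S ≃ Fin S.card := S.equivFin with he
  refine ⟨S.card,
    (fun w i => if w = ((e.symm i) : V × V).1 then (0 : ℝ)
      else if w = ((e.symm i) : V × V).2 then 1 else 0),
    (fun w i => if w = ((e.symm i) : V × V).1 then (0 : ℝ)
      else if w = ((e.symm i) : V × V).2 then 1 else 1), ?_⟩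
  intro u v huv
  constructor
  · intro hadj i
    have hp : ((e.symm i) : V × V) ∈ S := (e.symm i).2
    set p : V × V := ((e.symm i) : V × V) with hpdef
    have hp' : p.1 ≠ p.2 ∧ ¬G.Adj p.1 p.2 := by
      simpa [hS] using hp
    have h1 : ¬(u = p.1 ∧ v = p.2) := by
      rintro ⟨rfl, rfl⟩; exact hp'.2 hadj
    have h2 : ¬(u = p.2 ∧ v = p.1) := by
      rintro ⟨rfl, rfl⟩; exact hp'.2 hadj.symm
    by_cases hu1 : u = p.1 <;> by_cases hu2 : u = p.2 <;>
      by_cases hv1 : v = p.1 <;> by_cases hv2 : v = p.2 <;>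
      simp_all <;> norm_num
  · intro hrep
    by_contra hadj
    have hmem : (u, v) ∈ S := by simp [hS, huv, hadj]
    have h := hrep (e ⟨(u, v), hmem⟩)
    simp only [Equiv.symm_apply_apply] at h
    norm_num [Ne.symm huv] at h

/-- Cozzens–Roberts: if `S₁ = {a₁,…,aₙ}` and `S₂ = {b₁,…,bₙ}` are
disjoint and the only `S₁`–`S₂` edges of `Gᶜ` are `aᵢbᵢ`, then `box(G) ≥ ⌈n/2⌉`. -/
theorem boxicity_ge_ceil_half {V : Type*} [Fintype V] (G : SimpleGraph V) (n : ℕ)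
    (a b : Fin n → V) (ha : Function.Injective a) (hb : Function.Injective b)
    (hdisj : ∀ i j, a i ≠ b j)
    (hedges : ∀ i j, Gᶜ.Adj (a i) (b j) ↔ i = j) :
    (n + 1) / 2 ≤ boxicity G := by
  classical
  have hN : ∀ i, ¬ G.Adj (a i) (b i) := fun i =>
    ((G.compl_adj (a i) (b i)).1 ((hedges i i).2 rfl)).2
  have hA : ∀ i j, i ≠ j → G.Adj (a i) (b j) := by
    intro i j hij
    by_contra h
    exact hij ((hedges i j).1 ((G.compl_adj (a i) (b j)).2 ⟨hdisj i j, h⟩))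
  refine le_csInf (exists_hasBoxRep G) ?_
  rintro k ⟨lo, hi, hrep⟩
  rcases Nat.lt_or_ge n 2 with hn | hn
  · interval_cases n
    · simp
    · -- n = 1 : need 1 ≤ k
      have h := (hrep (a 0) (b 0) (hdisj 0 0)).2
      rcases Nat.eq_zero_or_pos k with rfl | hk
      · exact absurd (h (fun i => i.elim0)) (hN 0)
      · omega
  · -- n ≥ 2 : counting argument
    haveI : Nontrivial (Fin n) := Fin.nontrivial_iff_two_le.2 hn
    -- each pair is separated in some dimension
    have hsep : ∀ i, ∃ d, min (hi (a i) d) (hi (b i) d) < max (lo (a i) d) (lo (b i) d) := by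
      intro i
      have h := (hrep (a i) (b i) (hdisj i i))
      by_contra hc
      push_neg at hc
      exact hN i (h.2 (fun d => hc d))
    choose d hd using hsep
    -- all boxes are nonempty in every dimension
    have hmem : ∀ i j, i ≠ j → ∀ t, max (lo (a i) t) (lo (b j) t) ≤ min (hi (a i) t) (hi (b j) t) :=
      fun i j hij t => (hrep (a i) (b j) (hdisj i j)).1 (hA i j hij) t
    have hane : ∀ i t, lo (a i) t ≤ hi (a i) t := by
      intro i t
      obtain ⟨j, hj⟩ := exists_ne i
      have := hmem i j (Ne.symm hj) t
      exact le_trans (le_max_left _ _) (le_trans this (min_le_left _ _))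
    have hbne : ∀ i t, lo (b i) t ≤ hi (b i) t := by
      intro i t
      obtain ⟨j, hj⟩ := exists_ne i
      have := hmem j i hj t
      exact le_trans (le_max_right _ _) (le_trans this (min_le_right _ _))
    -- the separation is oriented
    have horient : ∀ i, hi (a i) (d i) < lo (b i) (d i) ∨ hi (b i) (d i) < lo (a i) (d i) := by
      intro i
      by_contra hc
      push_neg at hc
      have h1 := hane i (d i)
      have h2 := hbne i (d i)
      have := hd i
      rcases le_total (hi (a i) (d i)) (hi (b i) (d i)) with h | h <;>
        rcases le_total (lo (a i) (d i)) (lo (b i) (d i)) with h' | h' <;>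
        simp [min_eq_left, min_eq_right, max_eq_left, max_eq_right, h, h'] at this <;>
        linarith [hc.1, hc.2]
    -- the map i ↦ (dimension, orientation) is injective
    set F : Fin n → Fin k × Bool :=
      fun i => (d i, decide (hi (a i) (d i) < lo (b i) (d i))) with hF
    have hinj : Function.Injective F := by
      intro i j hij
      by_contra hne
      have hdij : d i = d j := congrArg Prod.fst hij
      have hbool := congrArg Prod.snd hij
      simp only [hF, decide_eq_decide] at hbool
      have hij1 := hmem i j hne (d i)
      have hij2 := hmem j i (Ne.symm hne) (d i)
      have e1 : lo (b j) (d i) ≤ hi (a i) (d i) :=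
        le_trans (le_max_right _ _) (le_trans hij1 (min_le_left _ _))
      have e2 : lo (b i) (d i) ≤ hi (a j) (d i) :=
        le_trans (le_max_right _ _) (le_trans hij2 (min_le_left _ _))
      have e3 : lo (a i) (d i) ≤ hi (b j) (d i) :=
        le_trans (le_max_left _ _) (le_trans hij1 (min_le_right _ _))
      have e4 : lo (a j) (d i) ≤ hi (b i) (d i) :=
        le_trans (le_max_left _ _) (le_trans hij2 (min_le_right _ _))
      by_cases hb1 : hi (a i) (d i) < lo (b i) (d i)
      · have hb2 : hi (a j) (d j) < lo (b j) (d j) := hbool.1 hb1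
        rw [← hdij] at hb2
        linarith
      · have hb2 : ¬ hi (a j) (d j) < lo (b j) (d j) := fun h => hb1 (hbool.2 h)
        have o1 : hi (b i) (d i) < lo (a i) (d i) := (horient i).resolve_left hb1
        have o2 : hi (b j) (d i) < lo (a j) (d i) := by
          have := (horient j).resolve_left hb2
          rwa [← hdij] at this
        linarith
    have hcard := Fintype.card_le_of_injective F hinj
    simp [Fintype.card_prod] at hcard
    omega
end

section
/- For the complete graph K_n (n ≥ 1), the boxicity of its Mycielski graph M_2(K_n) equals ⌈n/2⌉ if n is odd and ⌈n/2⌉ + 1 = n/2 + 1 if n is even. -/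
open SimpleGraph

namespace MycBox

variable {n : ℕ}

abbrev MG (n : ℕ) := genMycielski (completeGraph (Fin n)) 2


lemma adj_uu (i j : Fin n) : (MG n).Adj (some (i,0)) (some (j,0)) ↔ i ≠ j := by
  simp [genMycielski, SimpleGraph.fromRel_adj, completeGraph]
  tauto

lemma adj_uw (i j : Fin n) : (MG n).Adj (some (i,0)) (some (j,1)) ↔ i ≠ j := by
  simp [genMycielski, SimpleGraph.fromRel_adj, completeGraph]

lemma not_adj_ww (i j : Fin n) : ¬ (MG n).Adj (some (i,1)) (some (j,1)) := by
  simp [genMycielski, SimpleGraph.fromRel_adj, completeGraph]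

lemma adj_zw (i : Fin n) : (MG n).Adj none (some (i,1)) := by
  simp [genMycielski, SimpleGraph.fromRel_adj, completeGraph]

lemma not_adj_zu (i : Fin n) : ¬ (MG n).Adj none (some (i,0)) := by
  simp [genMycielski, SimpleGraph.fromRel_adj, completeGraph]

lemma lower (n : ℕ) (hn : 1 ≤ n) : ¬ HasBoxRep (MG n) (n/2) := by
  classical
  rintro ⟨lo, hi, H⟩
  -- case n = 1 : m = 0
  rcases eq_or_lt_of_le hn with h1 | h2
  · -- n = 1
    have i0 : Fin n := ⟨0, by omega⟩
    have hne : (none : Option (Fin n × Fin 2)) ≠ some (i0, 0) := by simp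
    have := (H none (some (i0, 0)) hne).mpr
      (by intro d; exact absurd d.2 (by omega))
    exact not_adj_zu i0 this
  -- now n ≥ 2
  have hn2 : 2 ≤ n := h2
  have hm1 : 1 ≤ n / 2 := by omega
  -- adjacency facts in all dimensions
  have Huu : ∀ (i j : Fin n), i ≠ j → ∀ d : Fin (n/2),
      max (lo (some (i,0)) d) (lo (some (j,0)) d)
        ≤ min (hi (some (i,0)) d) (hi (some (j,0)) d) := by
    intro i j hij d
    exact (H _ _ (by simp [hij])).mp ((adj_uu i j).mpr hij) d
  have Huw : ∀ (i j : Fin n), i ≠ j → ∀ d : Fin (n/2),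
      max (lo (some (i,0)) d) (lo (some (j,1)) d)
        ≤ min (hi (some (i,0)) d) (hi (some (j,1)) d) := by
    intro i j hij d
    exact (H _ _ (by simp)).mp ((adj_uw i j).mpr hij) d
  have Hzw : ∀ (i : Fin n) d,
      max (lo none d) (lo (some (i,1)) d) ≤ min (hi none d) (hi (some (i,1)) d) := by
    intro i d
    exact (H _ _ (by simp)).mp (adj_zw i) d
  -- nonemptiness of intervals
  have other : ∀ i : Fin n, ∃ j : Fin n, j ≠ i := by
    intro i
    rcases eq_or_ne i ⟨0, by omega⟩ with h | h
    · exact ⟨⟨1, by omega⟩, by simp [h, Fin.ext_iff]⟩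
    · exact ⟨⟨0, by omega⟩, fun hc => h (hc ▸ rfl)⟩
  have hune : ∀ (i : Fin n) d, lo (some (i,0)) d ≤ hi (some (i,0)) d := by
    intro i d
    obtain ⟨j, hj⟩ := other i
    have := Huu i j (Ne.symm hj) d
    exact le_trans (le_max_left _ _) (le_trans this (min_le_left _ _))
  have hwne : ∀ (i : Fin n) d, lo (some (i,1)) d ≤ hi (some (i,1)) d := by
    intro i d
    have := Hzw i d
    exact le_trans (le_max_right _ _) (le_trans this (min_le_right _ _))
  have hzne : ∀ d, lo (none : Option (Fin n × Fin 2)) d ≤ hi none d := by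
    intro d
    have := Hzw ⟨0, by omega⟩ d
    exact le_trans (le_max_left _ _) (le_trans this (min_le_left _ _))
  -- separations for the matching non-edges
  have sep_uw : ∀ i : Fin n, ∃ d : Fin (n/2),
      hi (some (i,0)) d < lo (some (i,1)) d ∨ hi (some (i,1)) d < lo (some (i,0)) d := by
    intro i
    have hne : (some (i,(0:Fin 2)) : Option (Fin n × Fin 2)) ≠ some (i,1) := by simp
    have hnadj : ¬ (MG n).Adj (some (i,0)) (some (i,1)) := by
      rw [adj_uw]; simp
    have := mt (H _ _ hne).mpr hnadj
    push_neg at this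
    obtain ⟨d, hd⟩ := this
    refine ⟨d, ?_⟩
    rcases max_cases (lo (some (i,0)) d) (lo (some (i,1)) d) with ⟨he, _⟩ | ⟨he, _⟩ <;>
      rcases min_cases (hi (some (i,0)) d) (hi (some (i,1)) d) with ⟨hf, _⟩ | ⟨hf, _⟩ <;>
        rw [he, hf] at hd
    · exact absurd hd (not_lt.mpr (hune i d))
    · exact Or.inr hd
    · exact Or.inl hd
    · exact absurd hd (not_lt.mpr (hwne i d))
  -- separation for z - u i
  have sep_zu : ∀ i : Fin n, ∃ d : Fin (n/2),
      hi (none : Option (Fin n × Fin 2)) d < lo (some (i,0)) d ∨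
        hi (some (i,0)) d < lo none d := by
    intro i
    have hne : (none : Option (Fin n × Fin 2)) ≠ some (i,0) := by simp
    have := mt (H _ _ hne).mpr (not_adj_zu i)
    push_neg at this
    obtain ⟨d, hd⟩ := this
    refine ⟨d, ?_⟩
    rcases max_cases (lo (none : Option (Fin n × Fin 2)) d) (lo (some (i,0)) d) with
        ⟨he, _⟩ | ⟨he, _⟩ <;>
      rcases min_cases (hi (none : Option (Fin n × Fin 2)) d) (hi (some (i,0)) d) with
        ⟨hf, _⟩ | ⟨hf, _⟩ <;> rw [he, hf] at hd
    · exact absurd hd (not_lt.mpr (hzne d))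
    · exact Or.inr hd
    · exact Or.inl hd
    · exact absurd hd (not_lt.mpr (hune i d))
  -- right/left separation predicates
  set R : Fin n → Fin (n/2) → Prop :=
    fun i d => hi (some (i,0)) d < lo (some (i,1)) d with hR
  set L : Fin n → Fin (n/2) → Prop :=
    fun i d => hi (some (i,1)) d < lo (some (i,0)) d with hL
  -- at most one right and one left per dimension
  have keyR : ∀ (i j : Fin n) (d : Fin (n/2)), i ≠ j → R i d → R j d → False := by
    intro i j d hij hi1 hj1
    have h1 := Huw j i (Ne.symm hij) d  -- u_j meets w_i
    have h2 := Huw i j hij d            -- u_i meets w_j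
    have e1 : lo (some (i,1)) d ≤ hi (some (j,0)) d :=
      le_trans (le_max_right _ _) (le_trans h1 (min_le_left _ _))
    have e2 : lo (some (j,1)) d ≤ hi (some (i,0)) d :=
      le_trans (le_max_right _ _) (le_trans h2 (min_le_left _ _))
    simp only [hR] at hi1 hj1
    linarith
  have keyL : ∀ (i j : Fin n) (d : Fin (n/2)), i ≠ j → L i d → L j d → False := by
    intro i j d hij hi1 hj1
    have h1 := Huw i j hij d
    have h2 := Huw j i (Ne.symm hij) d
    have e1 : lo (some (i,0)) d ≤ hi (some (j,1)) d :=
      le_trans (le_max_left _ _) (le_trans h1 (min_le_right _ _))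
    have e2 : lo (some (j,0)) d ≤ hi (some (i,1)) d :=
      le_trans (le_max_left _ _) (le_trans h2 (min_le_right _ _))
    simp only [hL] at hi1 hj1
    linarith
  -- the assignment of a separating dimension to each index
  choose f hf using sep_uw
  have card_le : ∀ d : Fin (n/2), (Finset.univ.filter (fun i => f i = d)).card ≤ 2 := by
    intro d
    have hsub : (Finset.univ.filter (fun i => f i = d)) ⊆
        (Finset.univ.filter (fun i => R i d)) ∪ (Finset.univ.filter (fun i => L i d)) := by
      intro i hi1
      simp only [Finset.mem_filter, Finset.mem_univ, true_and] at hi1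
      rcases hi1 ▸ hf i with h | h
      · simp [Finset.mem_union, Finset.mem_filter, hR, h]
      · simp [Finset.mem_union, Finset.mem_filter, hL, h]
    have hcR : (Finset.univ.filter (fun i => R i d)).card ≤ 1 := by
      apply Finset.card_le_one.mpr
      intro a ha b hb
      simp only [Finset.mem_filter, Finset.mem_univ, true_and] at ha hb
      by_contra hab
      exact keyR a b d hab ha hb
    have hcL : (Finset.univ.filter (fun i => L i d)).card ≤ 1 := by
      apply Finset.card_le_one.mpr
      intro a ha b hb
      simp only [Finset.mem_filter, Finset.mem_univ, true_and] at ha hb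
      by_contra hab
      exact keyL a b d hab ha hb
    calc (Finset.univ.filter (fun i => f i = d)).card
        ≤ _ := Finset.card_le_card hsub
      _ ≤ _ := Finset.card_union_le _ _
      _ ≤ 2 := by omega
  have hsum : (Finset.univ : Finset (Fin n)).card =
      ∑ d : Fin (n/2), (Finset.univ.filter (fun i => f i = d)).card := by
    exact Finset.card_eq_sum_card_fiberwise (fun i _ => Finset.mem_univ (f i))
  have hsumle : n ≤ 2 * (n / 2) := by
    have : ∑ d : Fin (n/2), (Finset.univ.filter (fun i => f i = d)).card ≤
        ∑ _d : Fin (n/2), 2 := Finset.sum_le_sum (fun d _ => card_le d)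
    simp only [Finset.sum_const, Finset.card_univ, Fintype.card_fin, smul_eq_mul] at this
    have hcn : (Finset.univ : Finset (Fin n)).card = n := by simp
    omega
  -- if n is odd this is already a contradiction
  rcases Nat.even_or_odd n with heven | hodd
  swap
  · obtain ⟨k, hk⟩ := hodd; omega
  -- n even : every fiber has exactly two elements
  obtain ⟨k, hk⟩ := heven
  have hnm : n = 2 * (n/2) := by omega
  have card_eq : ∀ d : Fin (n/2), (Finset.univ.filter (fun i => f i = d)).card = 2 := by
    intro d
    by_contra hne
    have hlt : (Finset.univ.filter (fun i => f i = d)).card < 2 :=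
      lt_of_le_of_ne (card_le d) hne
    have : ∑ dd : Fin (n/2), (Finset.univ.filter (fun i => f i = dd)).card <
        ∑ _dd : Fin (n/2), 2 :=
      Finset.sum_lt_sum (fun dd _ => card_le dd) ⟨d, Finset.mem_univ d, hlt⟩
    simp only [Finset.sum_const, Finset.card_univ, Fintype.card_fin, smul_eq_mul] at this
    have hcn : (Finset.univ : Finset (Fin n)).card = n := by simp
    omega
  -- pick the dimension separating z from u_0
  obtain ⟨d, hd⟩ := sep_zu ⟨0, by omega⟩
  obtain ⟨p, q, hpq, hset⟩ := Finset.card_eq_two.mp (card_eq d)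
  have hp : f p = d := by
    have : p ∈ Finset.univ.filter (fun i => f i = d) := by rw [hset]; simp
    simpa using this
  have hq : f q = d := by
    have : q ∈ Finset.univ.filter (fun i => f i = d) := by rw [hset]; simp
    simpa using this
  -- p and q are separated at d, one right one left
  have hsp := hp ▸ hf p
  have hsq := hq ▸ hf q
  -- final contradiction lemma
  have final : ∀ (a b i0 : Fin n), a ≠ b → R a d → L b d →
      (hi (none : Option (Fin n × Fin 2)) d < lo (some (i0,0)) d ∨
        hi (some (i0,0)) d < lo none d) → False := by
    intro a b i0 hab hRa hLb hzi
    simp only [hR] at hRa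
    simp only [hL] at hLb
    -- basic chains
    have c1 : lo (none : Option (Fin n × Fin 2)) d ≤ hi (some (b,1)) d :=
      le_trans (le_max_left _ _) (le_trans (Hzw b d) (min_le_right _ _))
    have c2 : lo (some (a,1)) d ≤ hi (none : Option (Fin n × Fin 2)) d :=
      le_trans (le_max_right _ _) (le_trans (Hzw a d) (min_le_left _ _))
    have c3 : lo (some (b,0)) d ≤ hi (some (a,0)) d :=
      le_trans (le_max_right _ _)
        (le_trans (Huu a b hab d) (min_le_left _ _))
    -- lo z ≤ hi w_b < lo u_b ≤ hi u_a < lo w_a ≤ hi z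
    rcases eq_or_ne i0 a with rfl | h0a
    · -- i0 = a
      have c4 : lo (some (i0,0)) d ≤ hi (some (b,1)) d :=
        le_trans (le_max_left _ _) (le_trans (Huw i0 b hab d) (min_le_right _ _))
      rcases hzi with h | h
      · linarith
      · linarith [hune i0 d]
    rcases eq_or_ne i0 b with rfl | h0b
    · -- i0 = b
      rcases hzi with h | h
      · linarith
      · linarith [hune i0 d]
    · -- generic
      have c5 : lo (some (i0,0)) d ≤ hi (some (b,1)) d :=
        le_trans (le_max_left _ _) (le_trans (Huw i0 b h0b d) (min_le_right _ _))
      have c6 : lo (some (a,1)) d ≤ hi (some (i0,0)) d :=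
        le_trans (le_max_right _ _) (le_trans (Huw i0 a h0a d) (min_le_left _ _))
      rcases hzi with h | h
      · linarith
      · linarith
  rcases hsp with hRp | hLp <;> rcases hsq with hRq | hLq
  · exact keyR p q d hpq hRp hRq
  · exact final p q _ hpq hRp hLq hd
  · exact final q p _ (Ne.symm hpq) hRq hLp hd
  · exact keyL p q d hpq hLp hLq


lemma hasBoxRep_mono {V : Type*} {G : SimpleGraph V} {k l : ℕ} (h : HasBoxRep G k)
    (hkl : k ≤ l) : HasBoxRep G l := by
  obtain ⟨lo, hi, H⟩ := h
  refine ⟨fun v i => if h : (i:ℕ) < k then lo v ⟨i, h⟩ else 0,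
          fun v i => if h : (i:ℕ) < k then hi v ⟨i, h⟩ else 1, ?_⟩
  intro u v huv
  rw [H u v huv]
  constructor
  · intro ha i
    by_cases h : (i:ℕ) < k
    · simpa only [dif_pos h] using ha ⟨i, h⟩
    · simp only [dif_neg h]; norm_num
  · intro ha i
    have := ha ⟨(i:ℕ), lt_of_lt_of_le i.2 hkl⟩
    simpa only [dif_pos i.2, Fin.eta] using this

/-- lo for `u i` -/
noncomputable def uLo (n : ℕ) (i : ℕ) (d : ℕ) : ℝ :=
  if d = n/2 then (if i = n-1 then 3 else 2)
  else (if i = 2*d+1 then 2 else 0)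

noncomputable def uHi (n : ℕ) (i : ℕ) (d : ℕ) : ℝ :=
  if d = n/2 then 4 else (if i = 2*d then 4 else 6)

noncomputable def wLo (n : ℕ) (i : ℕ) (d : ℕ) : ℝ :=
  if d = n/2 then 0
  else (if i = 2*d then 6 else if i = 2*d+1 then 0 else 1)

noncomputable def wHi (n : ℕ) (i : ℕ) (d : ℕ) : ℝ :=
  if d = n/2 then (if i = n-1 then 2 else 3)
  else (if i = 2*d then 6 else if i = 2*d+1 then 0 else 5)

noncomputable def zLo (n : ℕ) (d : ℕ) : ℝ := 0
noncomputable def zHi (n : ℕ) (d : ℕ) : ℝ := if d = n/2 then 0 else 6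

noncomputable def theLo (n : ℕ) (v : Option (Fin n × Fin 2)) (d : Fin (n/2+1)) : ℝ :=
  match v with
  | none => zLo n d
  | some (i, l) => if l = 0 then uLo n i d else wLo n i d

noncomputable def theHi (n : ℕ) (v : Option (Fin n × Fin 2)) (d : Fin (n/2+1)) : ℝ :=
  match v with
  | none => zHi n d
  | some (i, l) => if l = 0 then uHi n i d else wHi n i d

-- Edge checks
lemma E1 (i j d : ℕ) : max (uLo n i d) (uLo n j d) ≤ min (uHi n i d) (uHi n j d) := by
  simp only [uLo, uHi, max_le_iff, le_min_iff]
  split_ifs <;> norm_num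

lemma E2 (i j d : ℕ) (hin : i < n) (hjn : j < n) (hij : i ≠ j) :
    max (uLo n i d) (wLo n j d) ≤ min (uHi n i d) (wHi n j d) := by
  simp only [uLo, uHi, wLo, wHi, max_le_iff, le_min_iff]
  split_ifs <;> (try norm_num) <;> omega

lemma E3 (i d : ℕ) : max (zLo n d) (wLo n i d) ≤ min (zHi n d) (wHi n i d) := by
  simp only [zLo, zHi, wLo, wHi, max_le_iff, le_min_iff]
  split_ifs <;> norm_num

-- Non-edge separations: produce the dimension index (as a nat < n/2+1) with disjointness
lemma N1 (i : ℕ) (hin : i < n) :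
    ∃ d, d < n/2+1 ∧ min (uHi n i d) (wHi n i d) < max (uLo n i d) (wLo n i d) := by
  by_cases hi : i = n-1
  · refine ⟨n/2, by omega, ?_⟩
    simp only [uLo, uHi, wLo, wHi, if_pos rfl, if_pos hi, lt_max_iff, min_lt_iff]
    norm_num
  · refine ⟨i/2, by omega, ?_⟩
    have hd : ¬ (i/2 = n/2) := by omega
    rcases (by omega : i = 2*(i/2) ∨ i = 2*(i/2)+1) with h|h
    · simp only [uLo, uHi, wLo, wHi, if_neg hd, if_pos h, lt_max_iff, min_lt_iff]
      have : ¬ (i = 2*(i/2)+1) := by omega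
      simp only [if_neg this]
      norm_num
    · have h2 : ¬ (i = 2*(i/2)) := by omega
      simp only [uLo, uHi, wLo, wHi, if_neg hd, if_pos h, if_neg h2, lt_max_iff, min_lt_iff]
      norm_num

lemma N2 (i j : ℕ) (hin : i < n) (hjn : j < n) (hij : i ≠ j) (hi : i ≠ n - 1) :
    ∃ d, d < n/2+1 ∧ min (wHi n i d) (wHi n j d) < max (wLo n i d) (wLo n j d) := by
  refine ⟨i/2, by omega, ?_⟩
  have hd : ¬ (i/2 = n/2) := by omega
  simp only [wLo, wHi, if_neg hd, lt_max_iff, min_lt_iff]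
  split_ifs <;> (try norm_num) <;> omega

lemma N3 (i : ℕ) (hin : i < n) :
    ∃ d, d < n/2+1 ∧ min (zHi n d) (uHi n i d) < max (zLo n d) (uLo n i d) := by
  refine ⟨n/2, by omega, ?_⟩
  simp only [zLo, zHi, uLo, uHi, if_pos rfl, lt_max_iff, min_lt_iff]
  split_ifs <;> norm_num

lemma upper (n : ℕ) (hn : 1 ≤ n) : HasBoxRep (MG n) (n/2 + 1) := by
  classical
  refine ⟨theLo n, theHi n, ?_⟩
  have h2 : ∀ l : Fin 2, l = 0 ∨ l = 1 := by decide
  have hv : ∀ v : Option (Fin n × Fin 2),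
      v = none ∨ (∃ i, v = some (i,0)) ∨ (∃ i, v = some (i,1)) := by
    rintro (_|⟨i,l⟩)
    · exact Or.inl rfl
    · rcases h2 l with rfl|rfl
      · exact Or.inr (Or.inl ⟨i, rfl⟩)
      · exact Or.inr (Or.inr ⟨i, rfl⟩)
  have hvne : ∀ i j : Fin n, (i:ℕ) ≠ (j:ℕ) → i ≠ j := fun i j h hc => h (by rw [hc])
  intro u v huv
  rcases hv u with rfl | ⟨i, rfl⟩ | ⟨i, rfl⟩ <;>
    rcases hv v with rfl | ⟨j, rfl⟩ | ⟨j, rfl⟩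
  · exact absurd rfl huv
  -- z, u j
  · refine iff_of_false (not_adj_zu j) ?_
    intro hall
    obtain ⟨d, hd, hlt⟩ := N3 (n := n) j j.2
    have := hall ⟨d, hd⟩
    simp only [theLo, theHi, if_pos rfl] at this
    exact absurd this (not_le.mpr hlt)
  -- z, w j
  · refine iff_of_true (adj_zw j) ?_
    intro d
    simpa only [theLo, theHi, if_pos rfl, ↓reduceIte, if_neg (show (1 : Fin 2) ≠ 0 by decide)] using E3 (n := n) j d
  -- u i, z
  · refine iff_of_false (fun h => not_adj_zu i h.symm) ?_
    intro hall
    obtain ⟨d, hd, hlt⟩ := N3 (n := n) i i.2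
    have := hall ⟨d, hd⟩
    rw [max_comm, min_comm] at this
    simp only [theLo, theHi, if_pos rfl] at this
    exact absurd this (not_le.mpr hlt)
  -- u i, u j
  · have hij : i ≠ j := fun h => huv (by rw [h])
    refine iff_of_true ((adj_uu i j).mpr hij) ?_
    intro d
    simpa only [theLo, theHi, if_pos rfl, ↓reduceIte, if_neg (show (1 : Fin 2) ≠ 0 by decide)] using E1 (n := n) i j d
  -- u i, w j
  · rw [adj_uw]
    by_cases hij : i = j
    · subst hij
      refine iff_of_false (by simp) ?_
      intro hall
      obtain ⟨d, hd, hlt⟩ := N1 (n := n) i i.2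
      have := hall ⟨d, hd⟩
      simp only [theLo, theHi, if_pos rfl, if_neg (one_ne_zero)] at this
      exact absurd this (not_le.mpr hlt)
    · refine iff_of_true hij ?_
      intro d
      have hijv : (i:ℕ) ≠ (j:ℕ) := fun h => hij (Fin.ext h)
      simpa only [theLo, theHi, if_pos rfl, if_neg (one_ne_zero), ↓reduceIte, if_neg (show (1 : Fin 2) ≠ 0 by decide)] using
        E2 (n := n) i j d i.2 j.2 hijv
  -- w i, z
  · refine iff_of_true ((adj_zw i).symm) ?_
    intro d
    rw [max_comm, min_comm]
    simpa only [theLo, theHi, if_pos rfl, ↓reduceIte, if_neg (show (1 : Fin 2) ≠ 0 by decide)] using E3 (n := n) i d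
  -- w i, u j
  · rw [show ((MG n).Adj (some (i,1)) (some (j,0))) ↔ j ≠ i from ⟨fun h => (adj_uw j i).mp h.symm, fun h => ((adj_uw j i).mpr h).symm⟩]
    by_cases hij : j = i
    · subst hij
      refine iff_of_false (by simp) ?_
      intro hall
      obtain ⟨d, hd, hlt⟩ := N1 (n := n) j j.2
      have := hall ⟨d, hd⟩
      rw [max_comm, min_comm] at this
      simp only [theLo, theHi, if_pos rfl, if_neg (one_ne_zero)] at this
      exact absurd this (not_le.mpr hlt)
    · refine iff_of_true hij ?_
      intro d
      rw [max_comm, min_comm]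
      have hijv : (j:ℕ) ≠ (i:ℕ) := fun h => hij (Fin.ext h)
      simpa only [theLo, theHi, if_pos rfl, if_neg (one_ne_zero), ↓reduceIte, if_neg (show (1 : Fin 2) ≠ 0 by decide)] using
        E2 (n := n) j i d j.2 i.2 hijv
  -- w i, w j
  · have hij : i ≠ j := fun h => huv (by rw [h])
    refine iff_of_false (not_adj_ww i j) ?_
    intro hall
    have hijv : (i:ℕ) ≠ (j:ℕ) := fun h => hij (Fin.ext h)
    by_cases hi : (i:ℕ) = n - 1
    · have hj : (j:ℕ) ≠ n - 1 := by omega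
      obtain ⟨d, hd, hlt⟩ := N2 (n := n) j i j.2 i.2 (by omega) hj
      have := hall ⟨d, hd⟩
      rw [max_comm, min_comm] at this
      simp only [theLo, theHi, if_pos rfl, if_neg (one_ne_zero)] at this
      exact absurd this (not_le.mpr hlt)
    · obtain ⟨d, hd, hlt⟩ := N2 (n := n) i j i.2 j.2 hijv hi
      have := hall ⟨d, hd⟩
      simp only [theLo, theHi, if_pos rfl, if_neg (one_ne_zero)] at this
      exact absurd this (not_le.mpr hlt)


end MycBox

/-- `box(M₂(Kₙ)) = ⌈n/2⌉` for odd `n`, and `n/2 + 1` for even `n ≥ 2`. -/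
theorem boxicity_mycielski_complete (n : ℕ) (hn : 1 ≤ n) :
    boxicity (genMycielski (completeGraph (Fin n)) 2) =
      if Odd n then (n + 1) / 2 else n / 2 + 1 := by
  have hval : (if Odd n then (n + 1) / 2 else n / 2 + 1) = n / 2 + 1 := by
    by_cases h : Odd n
    · rw [if_pos h]; obtain ⟨k, hk⟩ := h; omega
    · rw [if_neg h]
  rw [hval]
  have h1 := MycBox.upper n hn
  have h2 := MycBox.lower n hn
  unfold boxicity
  have hne : {k | HasBoxRep (genMycielski (completeGraph (Fin n)) 2) k}.Nonempty :=
    ⟨n / 2 + 1, h1⟩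
  refine le_antisymm (Nat.sInf_le h1) (le_csInf hne ?_)
  intro k hk
  have hk' : HasBoxRep (MycBox.MG n) k := hk
  by_contra hlt
  push_neg at hlt
  have hk2 : k ≤ n / 2 := by omega
  exact h2 (MycBox.hasBoxRep_mono hk' hk2)
end

section
/- For any graph G with exactly l focal (universal) vertices, box(M_2(G)) ≤ θ(complement of G) + ⌈l/2⌉ + 1, where θ denotes the edge clique cover number. Moreover, if l is odd or l = 0, then box(M_2(G)) ≤ θ(complement of G) + ⌈l/2⌉. -/
open SimpleGraph

namespace BoxAux
variable {V : Type*}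

lemma fin2cases (i : Fin 2) : i = 0 ∨ i = 1 := by revert i; decide

lemma myc00 (G : SimpleGraph V) (u v : V) :
    (genMycielski G 2).Adj (some (u,0)) (some (v,0)) ↔ G.Adj u v := by
  simp [genMycielski, SimpleGraph.fromRel_adj]
  constructor
  · rintro ⟨h1, h2 | h2⟩
    · exact h2
    · exact h2.symm
  · intro h
    exact ⟨fun he => by simp [he] at h, Or.inl h⟩

lemma myc01 (G : SimpleGraph V) (u v : V) :
    (genMycielski G 2).Adj (some (u,0)) (some (v,1)) ↔ G.Adj u v := by
  simp [genMycielski, SimpleGraph.fromRel_adj]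

lemma myc10 (G : SimpleGraph V) (u v : V) :
    (genMycielski G 2).Adj (some (u,1)) (some (v,0)) ↔ G.Adj u v := by
  rw [SimpleGraph.adj_comm, myc01, SimpleGraph.adj_comm]

lemma myc11 (G : SimpleGraph V) (u v : V) :
    ¬ (genMycielski G 2).Adj (some (u,1)) (some (v,1)) := by
  simp [genMycielski, SimpleGraph.fromRel_adj]

lemma mycz1 (G : SimpleGraph V) (v : V) :
    (genMycielski G 2).Adj none (some (v,1)) := by
  simp [genMycielski, SimpleGraph.fromRel_adj]

lemma mycz0 (G : SimpleGraph V) (v : V) :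
    ¬ (genMycielski G 2).Adj none (some (v,0)) := by
  simp [genMycielski, SimpleGraph.fromRel_adj]

lemma box_le {la lb ha hb : ℝ} (h1 : la ≤ ha) (h2 : la ≤ hb) (h3 : lb ≤ ha) (h4 : lb ≤ hb) :
    max la lb ≤ min ha hb := max_le (le_min h1 h2) (le_min h3 h4)

lemma sep_lr {la lb ha hb : ℝ} (h : hb < la) : ¬(max la lb ≤ min ha hb) := fun hc =>
  absurd ((le_max_left la lb).trans (hc.trans (min_le_right ha hb))) (not_le.mpr h)

lemma sep_rl {la lb ha hb : ℝ} (h : ha < lb) : ¬(max la lb ≤ min ha hb) := fun hc =>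
  absurd ((le_max_right la lb).trans (hc.trans (min_le_left ha hb))) (not_le.mpr h)

lemma sep_symm {la lb ha hb : ℝ} (h : ¬(max la lb ≤ min ha hb)) :
    ¬(max lb la ≤ min hb ha) := by rwa [max_comm, min_comm]

open Classical in
noncomputable def cliqueLo (ψ : V → ℝ) (S : Set V) : Option (V × Fin 2) → ℝ
  | none => 0
  | some (v, i) =>
      if (i : ℕ) = 0 then (if v ∈ S then -1 - ψ v else -2)
      else (if v ∈ S then ψ v else -2)

open Classical in
noncomputable def cliqueHi (ψ : V → ℝ) (S : Set V) : Option (V × Fin 2) → ℝ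
  | none => 1
  | some (v, i) =>
      if (i : ℕ) = 0 then (if v ∈ S then -1 - ψ v else 1)
      else (if v ∈ S then ψ v else 0)

open Classical in
noncomputable def pairLo (u v : V) : Option (V × Fin 2) → ℝ
  | none => 0
  | some (x, i) =>
      if (i : ℕ) = 0 then (if x = u then 1 else 0)
      else (if x = u then 0 else if x = v then 10 else 1)

open Classical in
noncomputable def pairHi (u v : V) : Option (V × Fin 2) → ℝ
  | none => 10
  | some (x, i) =>
      if (i : ℕ) = 0 then (if x = u then 10 else if x = v then 9 else 10)
      else (if x = u then 0 else if x = v then 10 else 9)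

open Classical in
noncomputable def leftLo (u : V) : Option (V × Fin 2) → ℝ
  | none => 2
  | some (x, i) =>
      if (i : ℕ) = 0 then 0
      else (if x = u then 1 else 0)

open Classical in
noncomputable def leftHi (u : V) : Option (V × Fin 2) → ℝ
  | none => 3
  | some (x, i) =>
      if (i : ℕ) = 0 then (if x = u then 0 else 1)
      else 2



section Pres
variable {V : Type*}

lemma clique_pres (G : SimpleGraph V) (ψ : V → ℝ)
    (hψ0 : ∀ v, 0 < ψ v) (hψ1 : ∀ v, ψ v < 1)
    (S : Set V) (hS : Gᶜ.IsClique S) :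
    ∀ a b, (genMycielski G 2).Adj a b →
      max (cliqueLo ψ S a) (cliqueLo ψ S b) ≤ min (cliqueHi ψ S a) (cliqueHi ψ S b) := by
  have key : ∀ u v : V, G.Adj u v → ¬(u ∈ S ∧ v ∈ S) := fun u v huv ⟨hu, hv⟩ =>
    (hS hu hv huv.ne).2 huv
  rintro (_ | ⟨u, i⟩) (_ | ⟨v, j⟩) hadj
  · exact absurd rfl hadj.ne
  · rcases fin2cases j with rfl | rfl
    · exact absurd hadj (mycz0 G v)
    · by_cases hv : v ∈ S <;>
        refine box_le ?_ ?_ ?_ ?_ <;>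
        simp [cliqueLo, cliqueHi, hv] <;>
        linarith [hψ0 v, hψ1 v]
  · rcases fin2cases i with rfl | rfl
    · exact absurd (hadj.symm) (mycz0 G u)
    · by_cases hu : u ∈ S <;>
        refine box_le ?_ ?_ ?_ ?_ <;>
        simp [cliqueLo, cliqueHi, hu] <;>
        linarith [hψ0 u, hψ1 u]
  · rcases fin2cases i with rfl | rfl <;> rcases fin2cases j with rfl | rfl
    · rw [myc00] at hadj
      by_cases hu : u ∈ S <;> by_cases hv : v ∈ S
      · exact absurd ⟨hu, hv⟩ (key u v hadj)
      all_goals refine box_le ?_ ?_ ?_ ?_ <;>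
        simp [cliqueLo, cliqueHi, hu, hv] <;>
        linarith [hψ0 u, hψ1 u, hψ0 v, hψ1 v]
    · rw [myc01] at hadj
      by_cases hu : u ∈ S <;> by_cases hv : v ∈ S
      · exact absurd ⟨hu, hv⟩ (key u v hadj)
      all_goals refine box_le ?_ ?_ ?_ ?_ <;>
        simp [cliqueLo, cliqueHi, hu, hv] <;>
        linarith [hψ0 u, hψ1 u, hψ0 v, hψ1 v]
    · rw [myc10] at hadj
      by_cases hu : u ∈ S <;> by_cases hv : v ∈ S
      · exact absurd ⟨hv, hu⟩ (key v u hadj.symm)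
      all_goals refine box_le ?_ ?_ ?_ ?_ <;>
        simp [cliqueLo, cliqueHi, hu, hv] <;>
        linarith [hψ0 u, hψ1 u, hψ0 v, hψ1 v]
    · exact absurd hadj (myc11 G u v)

lemma pair_pres (G : SimpleGraph V) (u v : V) :
    ∀ a b, (genMycielski G 2).Adj a b →
      max (pairLo u v a) (pairLo u v b) ≤ min (pairHi u v a) (pairHi u v b) := by
  rintro (_ | ⟨x, i⟩) (_ | ⟨y, j⟩) hadj
  · exact absurd rfl hadj.ne
  · rcases fin2cases j with rfl | rfl <;>
      refine box_le ?_ ?_ ?_ ?_ <;>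
      simp [pairLo, pairHi] <;> (try split_ifs) <;> norm_num
  · rcases fin2cases i with rfl | rfl <;>
      refine box_le ?_ ?_ ?_ ?_ <;>
      simp [pairLo, pairHi] <;> (try split_ifs) <;> norm_num
  · rcases fin2cases i with rfl | rfl <;> rcases fin2cases j with rfl | rfl
    · rw [myc00] at hadj
      have hxy : x ≠ y := hadj.ne
      refine box_le ?_ ?_ ?_ ?_ <;> simp [pairLo, pairHi] <;> (try split_ifs) <;> (first | (norm_num; done) | simp_all)
    · rw [myc01] at hadj
      have hxy : x ≠ y := hadj.ne
      refine box_le ?_ ?_ ?_ ?_ <;> simp [pairLo, pairHi] <;> (try split_ifs) <;> (first | (norm_num; done) | simp_all)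
    · rw [myc10] at hadj
      have hxy : x ≠ y := hadj.ne
      refine box_le ?_ ?_ ?_ ?_ <;> simp [pairLo, pairHi] <;> (try split_ifs) <;> (first | (norm_num; done) | simp_all)
    · exact absurd hadj (myc11 G x y)

lemma left_pres (G : SimpleGraph V) (u : V) :
    ∀ a b, (genMycielski G 2).Adj a b →
      max (leftLo u a) (leftLo u b) ≤ min (leftHi u a) (leftHi u b) := by
  rintro (_ | ⟨x, i⟩) (_ | ⟨y, j⟩) hadj
  · exact absurd rfl hadj.ne
  · rcases fin2cases j with rfl | rfl
    · exact absurd hadj (mycz0 G y)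
    · refine box_le ?_ ?_ ?_ ?_ <;> simp [leftLo, leftHi] <;> (try split_ifs) <;> norm_num
  · rcases fin2cases i with rfl | rfl
    · exact absurd (hadj.symm) (mycz0 G x)
    · refine box_le ?_ ?_ ?_ ?_ <;> simp [leftLo, leftHi] <;> (try split_ifs) <;> norm_num
  · rcases fin2cases i with rfl | rfl <;> rcases fin2cases j with rfl | rfl
    · refine box_le ?_ ?_ ?_ ?_ <;> simp [leftLo, leftHi] <;> (try split_ifs) <;> norm_num
    · rw [myc01] at hadj
      have hxy : x ≠ y := hadj.ne
      refine box_le ?_ ?_ ?_ ?_ <;> simp [leftLo, leftHi] <;> (try split_ifs) <;> (first | (norm_num; done) | simp_all)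
    · rw [myc10] at hadj
      have hxy : x ≠ y := hadj.ne
      refine box_le ?_ ?_ ?_ ?_ <;> simp [leftLo, leftHi] <;> (try split_ifs) <;> (first | (norm_num; done) | simp_all)
    · exact absurd hadj (myc11 G x y)

end Pres

section Sep
variable {V : Type*} (ψ : V → ℝ) (S : Set V)

lemma c_sep_00 (hψinj : Function.Injective ψ) {u v : V} (hu : u ∈ S) (hv : v ∈ S)
    (huv : u ≠ v) :
    ¬(max (cliqueLo ψ S (some (u,0))) (cliqueLo ψ S (some (v,0))) ≤
      min (cliqueHi ψ S (some (u,0))) (cliqueHi ψ S (some (v,0)))) := by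
  have : ψ u ≠ ψ v := fun h => huv (hψinj h)
  rcases this.lt_or_gt with h | h
  · exact sep_lr (by simp [cliqueLo, cliqueHi, hu, hv]; linarith)
  · exact sep_rl (by simp [cliqueLo, cliqueHi, hu, hv]; linarith)

lemma c_sep_01 (hψ0 : ∀ v, 0 < ψ v) {u v : V} (hu : u ∈ S) (hv : v ∈ S) :
    ¬(max (cliqueLo ψ S (some (u,0))) (cliqueLo ψ S (some (v,1))) ≤
      min (cliqueHi ψ S (some (u,0))) (cliqueHi ψ S (some (v,1)))) := by
  exact sep_rl (by simp [cliqueLo, cliqueHi, hu, hv]; linarith [hψ0 u, hψ0 v])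

lemma c_sep_11 (hψinj : Function.Injective ψ) {u v : V} (hu : u ∈ S) (hv : v ∈ S)
    (huv : u ≠ v) :
    ¬(max (cliqueLo ψ S (some (u,1))) (cliqueLo ψ S (some (v,1))) ≤
      min (cliqueHi ψ S (some (u,1))) (cliqueHi ψ S (some (v,1)))) := by
  have : ψ u ≠ ψ v := fun h => huv (hψinj h)
  rcases this.lt_or_gt with h | h
  · exact sep_rl (by simp [cliqueLo, cliqueHi, hu, hv]; linarith)
  · exact sep_lr (by simp [cliqueLo, cliqueHi, hu, hv]; linarith)

lemma c_sep_1out (hψ0 : ∀ v, 0 < ψ v) {u v : V} (hu : u ∈ S) (hv : v ∉ S) :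
    ¬(max (cliqueLo ψ S (some (u,1))) (cliqueLo ψ S (some (v,1))) ≤
      min (cliqueHi ψ S (some (u,1))) (cliqueHi ψ S (some (v,1)))) := by
  exact sep_lr (by simp [cliqueLo, cliqueHi, hu, hv]; linarith [hψ0 u])

lemma c_sep_z0 (hψ0 : ∀ v, 0 < ψ v) {u : V} (hu : u ∈ S) :
    ¬(max (cliqueLo ψ S none) (cliqueLo ψ S (some (u,0))) ≤
      min (cliqueHi ψ S none) (cliqueHi ψ S (some (u,0)))) := by
  exact sep_lr (by simp [cliqueLo, cliqueHi, hu]; linarith [hψ0 u])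

variable (u v : V)

lemma p_sep_u :
    ¬(max (pairLo u v (some (u,0))) (pairLo u v (some (u,1))) ≤
      min (pairHi u v (some (u,0))) (pairHi u v (some (u,1)))) := by
  exact sep_lr (by simp [pairLo, pairHi] <;> norm_num)

lemma p_sep_v (hvu : v ≠ u) :
    ¬(max (pairLo u v (some (v,0))) (pairLo u v (some (v,1))) ≤
      min (pairHi u v (some (v,0))) (pairHi u v (some (v,1)))) := by
  exact sep_rl (by simp [pairLo, pairHi, hvu] <;> norm_num)

lemma p_sep_sh {w : V} (hw : w ≠ u) :
    ¬(max (pairLo u v (some (u,1))) (pairLo u v (some (w,1))) ≤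
      min (pairHi u v (some (u,1))) (pairHi u v (some (w,1)))) := by
  by_cases hwv : w = v
  · subst hwv
    exact sep_rl (by simp [pairLo, pairHi, hw] <;> norm_num)
  · exact sep_rl (by simp [pairLo, pairHi, hw, hwv] <;> norm_num)

lemma p_sep_shv (hvu : v ≠ u) {w : V} (hw : w ≠ v) :
    ¬(max (pairLo u v (some (v,1))) (pairLo u v (some (w,1))) ≤
      min (pairHi u v (some (v,1))) (pairHi u v (some (w,1)))) := by
  by_cases hwu : w = u
  · subst hwu
    exact sep_lr (by simp [pairLo, pairHi, hvu] <;> norm_num)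
  · exact sep_lr (by simp [pairLo, pairHi, hvu, hw, hwu] <;> norm_num)

lemma l_sep_01 :
    ¬(max (leftLo u (some (u,0))) (leftLo u (some (u,1))) ≤
      min (leftHi u (some (u,0))) (leftHi u (some (u,1)))) := by
  exact sep_rl (by simp [leftLo, leftHi] <;> norm_num)

lemma l_sep_z0 (x : V) :
    ¬(max (leftLo u none) (leftLo u (some (x,0))) ≤
      min (leftHi u none) (leftHi u (some (x,0)))) := by
  by_cases hx : x = u
  · exact sep_lr (by simp [leftLo, leftHi, hx] <;> norm_num)
  · exact sep_lr (by simp [leftLo, leftHi, hx] <;> norm_num)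

end Sep

section Main
variable {V : Type*}

/-- wrappers with an equality parameter -/
lemma p_sep_u' (u v x : V) (hx : x = u) :
    ¬(max (pairLo u v (some (x,0))) (pairLo u v (some (x,1))) ≤
      min (pairHi u v (some (x,0))) (pairHi u v (some (x,1)))) := by
  subst hx; exact p_sep_u _ _

lemma p_sep_v' (u v x : V) (hx : x = v) (hvu : v ≠ u) :
    ¬(max (pairLo u v (some (x,0))) (pairLo u v (some (x,1))) ≤
      min (pairHi u v (some (x,0))) (pairHi u v (some (x,1)))) := by
  subst hx; exact p_sep_v _ _ hvu

lemma p_sep_sh' (u v x w : V) (hx : x = u) (hw : w ≠ u) :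
    ¬(max (pairLo u v (some (x,1))) (pairLo u v (some (w,1))) ≤
      min (pairHi u v (some (x,1))) (pairHi u v (some (w,1)))) := by
  subst hx; exact p_sep_sh _ _ hw

lemma p_sep_shv' (u v x w : V) (hx : x = v) (hvu : v ≠ u) (hw : w ≠ v) :
    ¬(max (pairLo u v (some (x,1))) (pairLo u v (some (w,1))) ≤
      min (pairHi u v (some (x,1))) (pairHi u v (some (w,1)))) := by
  subst hx; exact p_sep_shv _ _ hvu hw

noncomputable def extraLo (l : ℕ) (g : ℕ → V) (n : ℕ) : Option (V × Fin 2) → ℝ :=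
  fun a => if 2*n+1 < l then pairLo (g (2*n)) (g (2*n+1)) a else leftLo (g (l-1)) a

noncomputable def extraHi (l : ℕ) (g : ℕ → V) (n : ℕ) : Option (V × Fin 2) → ℝ :=
  fun a => if 2*n+1 < l then pairHi (g (2*n)) (g (2*n+1)) a else leftHi (g (l-1)) a

lemma extra_pres (G : SimpleGraph V) (l : ℕ) (g : ℕ → V) (n : ℕ) :
    ∀ a b, (genMycielski G 2).Adj a b →
      max (extraLo l g n a) (extraLo l g n b) ≤ min (extraHi l g n a) (extraHi l g n b) := by
  intro a b hadj
  by_cases h2 : 2*n+1 < l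
  · simp only [extraLo, extraHi, if_pos h2]
    exact pair_pres G _ _ a b hadj
  · simp only [extraLo, extraHi, if_neg h2]
    exact left_pres G _ a b hadj

noncomputable def mainLo (ψ : V → ℝ) {t : ℕ} (f : Fin t → Set V) (l : ℕ) (g : ℕ → V)
    (a : Option (V × Fin 2)) : (Fin t ⊕ Fin (l/2+1)) → ℝ :=
  Sum.elim (fun i => cliqueLo ψ (f i) a) (fun j => extraLo l g (j : ℕ) a)

noncomputable def mainHi (ψ : V → ℝ) {t : ℕ} (f : Fin t → Set V) (l : ℕ) (g : ℕ → V)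
    (a : Option (V × Fin 2)) : (Fin t ⊕ Fin (l/2+1)) → ℝ :=
  Sum.elim (fun i => cliqueHi ψ (f i) a) (fun j => extraHi l g (j : ℕ) a)

lemma main_iff (G : SimpleGraph V) (ψ : V → ℝ)
    (hψ0 : ∀ v, 0 < ψ v) (hψ1 : ∀ v, ψ v < 1) (hψinj : Function.Injective ψ)
    {t : ℕ} (f : Fin t → Set V) (hfc : ∀ i, Gᶜ.IsClique (f i))
    (hfcov : ∀ u v, Gᶜ.Adj u v → ∃ i, u ∈ f i ∧ v ∈ f i)
    (l : ℕ) (hl0 : 0 < l) (g : ℕ → V)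
    (hginj : ∀ k k', k < l → k' < l → g k = g k' → k = k')
    (hgsurj : ∀ x, IsFocal G x → ∃ k, k < l ∧ g k = x) :
    ∀ a b, a ≠ b → ((genMycielski G 2).Adj a b ↔
      ∀ c, max (mainLo ψ f l g a c) (mainLo ψ f l g b c) ≤
        min (mainHi ψ f l g a c) (mainHi ψ f l g b c)) := by
  have hcov' : ∀ u v : V, u ≠ v → ¬G.Adj u v → ∃ i, u ∈ f i ∧ v ∈ f i := fun u v h1 h2 =>
    hfcov u v ((SimpleGraph.compl_adj G u v).mpr ⟨h1, h2⟩)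
  have hnonfocal : ∀ u : V, ¬IsFocal G u → ∃ i, u ∈ f i := by
    intro u hu
    unfold IsFocal at hu
    push_neg at hu
    obtain ⟨w, hw1, hw2⟩ := hu
    obtain ⟨i, hi1, _⟩ := hcov' u w (Ne.symm hw1) hw2
    exact ⟨i, hi1⟩
  have hnotboth : ∀ (i : Fin t) (u v : V), G.Adj u v → u ∈ f i → v ∉ f i := by
    intro i u v hadj hu hv
    exact (hfc i hu hv hadj.ne).2 hadj
  -- separation for (x₀, x₁) for focal x
  have hfoc01 : ∀ x : V, IsFocal G x → ∃ c : Fin t ⊕ Fin (l/2+1),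
      ¬(max (mainLo ψ f l g (some (x,0)) c) (mainLo ψ f l g (some (x,1)) c) ≤
        min (mainHi ψ f l g (some (x,0)) c) (mainHi ψ f l g (some (x,1)) c)) := by
    intro x hx
    obtain ⟨k, hk, hgk⟩ := hgsurj x hx
    subst hgk
    by_cases h2 : 2*(k/2)+1 < l
    · refine ⟨Sum.inr ⟨k/2, by omega⟩, ?_⟩
      simp only [mainLo, mainHi, Sum.elim_inr, extraLo, extraHi, if_pos h2]
      rcases Nat.even_or_odd k with he | ho
      · rw [Nat.even_iff] at he
        have hke : 2*(k/2) = k := by omega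
        exact p_sep_u' _ _ _ (congrArg g hke).symm
      · rw [Nat.odd_iff] at ho
        have hko : 2*(k/2)+1 = k := by omega
        have hvu : g (2*(k/2)+1) ≠ g (2*(k/2)) := fun hq => by
          have := hginj _ _ (by omega) (by omega) hq; omega
        exact p_sep_v' _ _ _ (congrArg g hko).symm hvu
    · have hk1 : k = l - 1 := by omega
      subst hk1
      refine ⟨Sum.inr ⟨l/2, by omega⟩, ?_⟩
      have hj : ¬(2*(l/2)+1 < l) := by omega
      simp only [mainLo, mainHi, Sum.elim_inr, extraLo, extraHi, if_neg hj]
      exact l_sep_01 (g (l-1))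
  -- separation for (x₁, y₁) for focal x y
  have hcore : ∀ x y : V, ∀ k, k < l → g k = x → 2*(k/2)+1 < l → y ≠ x →
      ∃ c : Fin t ⊕ Fin (l/2+1),
      ¬(max (mainLo ψ f l g (some (x,1)) c) (mainLo ψ f l g (some (y,1)) c) ≤
        min (mainHi ψ f l g (some (x,1)) c) (mainHi ψ f l g (some (y,1)) c)) := by
    intro x y k hk hgk h2 hyx
    subst hgk
    refine ⟨Sum.inr ⟨k/2, by omega⟩, ?_⟩
    simp only [mainLo, mainHi, Sum.elim_inr, extraLo, extraHi, if_pos h2]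
    rcases Nat.even_or_odd k with he | ho
    · rw [Nat.even_iff] at he
      have hke : 2*(k/2) = k := by omega
      exact p_sep_sh' _ _ _ _ (congrArg g hke).symm (fun h => hyx (h.trans (congrArg g hke)))
    · rw [Nat.odd_iff] at ho
      have hko : 2*(k/2)+1 = k := by omega
      have hvu : g (2*(k/2)+1) ≠ g (2*(k/2)) := fun hq => by
        have := hginj _ _ (by omega) (by omega) hq; omega
      exact p_sep_shv' _ _ _ _ (congrArg g hko).symm hvu
        (fun h => hyx (h.trans (congrArg g hko)))
  have hfocsh : ∀ x y : V, IsFocal G x → IsFocal G y → x ≠ y →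
      ∃ c : Fin t ⊕ Fin (l/2+1),
      ¬(max (mainLo ψ f l g (some (x,1)) c) (mainLo ψ f l g (some (y,1)) c) ≤
        min (mainHi ψ f l g (some (x,1)) c) (mainHi ψ f l g (some (y,1)) c)) := by
    intro x y hx hy hxy
    obtain ⟨k, hk, hgk⟩ := hgsurj x hx
    obtain ⟨k', hk', hgk'⟩ := hgsurj y hy
    by_cases h2 : 2*(k/2)+1 < l
    · exact hcore x y k hk hgk h2 (Ne.symm hxy)
    · have hkk' : k ≠ k' := fun h => hxy (by rw [← hgk, ← hgk', h])
      have h2' : 2*(k'/2)+1 < l := by omega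
      obtain ⟨c, hc⟩ := hcore y x k' hk' hgk' h2' hxy
      exact ⟨c, sep_symm hc⟩
  intro a b hab
  constructor
  · intro hadj c
    rcases c with i | j
    · exact clique_pres G ψ hψ0 hψ1 (f i) (hfc i) a b hadj
    · exact extra_pres G l g (j : ℕ) a b hadj
  · intro hall
    by_contra hnadj
    have hleftc : ¬(2*(((⟨l/2, by omega⟩ : Fin (l/2+1))) : ℕ)+1 < l) := by
      simp only [Fin.val_mk]; omega
    rcases a with _ | ⟨u, i⟩ <;> rcases b with _ | ⟨v, j⟩
    · exact hab rfl
    · rcases fin2cases j with rfl | rfl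
      · refine absurd (hall (Sum.inr ⟨l/2, by omega⟩)) ?_
        simp only [mainLo, mainHi, Sum.elim_inr, extraLo, extraHi, if_neg hleftc]
        exact l_sep_z0 (g (l-1)) v
      · exact hnadj (mycz1 G v)
    · rcases fin2cases i with rfl | rfl
      · refine absurd (hall (Sum.inr ⟨l/2, by omega⟩)) ?_
        simp only [mainLo, mainHi, Sum.elim_inr, extraLo, extraHi, if_neg hleftc]
        exact sep_symm (l_sep_z0 (g (l-1)) u)
      · exact hnadj (mycz1 G u).symm
    · have hGadj : ∀ i' j' : Fin 2, ¬ G.Adj u v →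
        True := fun _ _ _ => trivial
      rcases fin2cases i with rfl | rfl <;> rcases fin2cases j with rfl | rfl
      · -- (u,0) (v,0)
        have huv : u ≠ v := fun h => hab (by rw [h])
        have hng : ¬ G.Adj u v := fun h => hnadj ((myc00 G u v).mpr h)
        obtain ⟨i, hu, hv⟩ := hcov' u v huv hng
        refine absurd (hall (Sum.inl i)) ?_
        simp only [mainLo, mainHi, Sum.elim_inl]
        exact c_sep_00 ψ (f i) hψinj hu hv huv
      · -- (u,0) (v,1)
        have hng : ¬ G.Adj u v := fun h => hnadj ((myc01 G u v).mpr h)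
        by_cases huv : u = v
        · subst huv
          by_cases hfo : IsFocal G u
          · obtain ⟨c, hc⟩ := hfoc01 u hfo
            exact hc (hall c)
          · obtain ⟨i, hu⟩ := hnonfocal u hfo
            refine absurd (hall (Sum.inl i)) ?_
            simp only [mainLo, mainHi, Sum.elim_inl]
            exact c_sep_01 ψ (f i) hψ0 hu hu
        · obtain ⟨i, hu, hv⟩ := hcov' u v huv hng
          refine absurd (hall (Sum.inl i)) ?_
          simp only [mainLo, mainHi, Sum.elim_inl]
          exact c_sep_01 ψ (f i) hψ0 hu hv
      · -- (u,1) (v,0)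
        have hng : ¬ G.Adj u v := fun h => hnadj ((myc10 G u v).mpr h)
        by_cases huv : u = v
        · subst huv
          by_cases hfo : IsFocal G u
          · obtain ⟨c, hc⟩ := hfoc01 u hfo
            exact (sep_symm hc) (hall c)
          · obtain ⟨i, hu⟩ := hnonfocal u hfo
            refine absurd (hall (Sum.inl i)) ?_
            simp only [mainLo, mainHi, Sum.elim_inl]
            exact sep_symm (c_sep_01 ψ (f i) hψ0 hu hu)
        · obtain ⟨i, hv, hu⟩ := hcov' v u (Ne.symm huv) (fun h => hng h.symm)
          refine absurd (hall (Sum.inl i)) ?_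
          simp only [mainLo, mainHi, Sum.elim_inl]
          exact sep_symm (c_sep_01 ψ (f i) hψ0 hv hu)
      · -- (u,1) (v,1)
        have huv : u ≠ v := fun h => hab (by rw [h])
        by_cases hG : G.Adj u v
        · by_cases hfu : IsFocal G u
          · by_cases hfv : IsFocal G v
            · obtain ⟨c, hc⟩ := hfocsh u v hfu hfv huv
              exact hc (hall c)
            · obtain ⟨i, hv⟩ := hnonfocal v hfv
              have hu : u ∉ f i := hnotboth i v u hG.symm hv
              refine absurd (hall (Sum.inl i)) ?_
              simp only [mainLo, mainHi, Sum.elim_inl]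
              exact sep_symm (c_sep_1out ψ (f i) hψ0 hv hu)
          · obtain ⟨i, hu⟩ := hnonfocal u hfu
            have hv : v ∉ f i := hnotboth i u v hG hu
            refine absurd (hall (Sum.inl i)) ?_
            simp only [mainLo, mainHi, Sum.elim_inl]
            exact c_sep_1out ψ (f i) hψ0 hu hv
        · obtain ⟨i, hu, hv⟩ := hcov' u v huv hG
          refine absurd (hall (Sum.inl i)) ?_
          simp only [mainLo, mainHi, Sum.elim_inl]
          exact c_sep_11 ψ (f i) hψinj hu hv huv

end Main

lemma main_iff0 (G : SimpleGraph V) (ψ : V → ℝ)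
    (hψ0 : ∀ v, 0 < ψ v) (hψ1 : ∀ v, ψ v < 1) (hψinj : Function.Injective ψ)
    {t : ℕ} (f : Fin t → Set V) (hfc : ∀ i, Gᶜ.IsClique (f i))
    (hfcov : ∀ u v, Gᶜ.Adj u v → ∃ i, u ∈ f i ∧ v ∈ f i)
    (hnf : ∀ v : V, ¬ IsFocal G v) :
    ∀ a b, a ≠ b → ((genMycielski G 2).Adj a b ↔
      ∀ i : Fin t, max (cliqueLo ψ (f i) a) (cliqueLo ψ (f i) b) ≤
        min (cliqueHi ψ (f i) a) (cliqueHi ψ (f i) b)) := by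
  have hcov' : ∀ u v : V, u ≠ v → ¬G.Adj u v → ∃ i, u ∈ f i ∧ v ∈ f i := fun u v h1 h2 =>
    hfcov u v ((SimpleGraph.compl_adj G u v).mpr ⟨h1, h2⟩)
  have hnonfocal : ∀ u : V, ∃ i, u ∈ f i := by
    intro u
    have hu := hnf u
    unfold IsFocal at hu
    push_neg at hu
    obtain ⟨w, hw1, hw2⟩ := hu
    obtain ⟨i, hi1, _⟩ := hcov' u w (Ne.symm hw1) hw2
    exact ⟨i, hi1⟩
  have hnotboth : ∀ (i : Fin t) (u v : V), G.Adj u v → u ∈ f i → v ∉ f i := by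
    intro i u v hadj hu hv
    exact (hfc i hu hv hadj.ne).2 hadj
  intro a b hab
  constructor
  · intro hadj i
    exact clique_pres G ψ hψ0 hψ1 (f i) (hfc i) a b hadj
  · intro hall
    by_contra hnadj
    rcases a with _ | ⟨u, i⟩ <;> rcases b with _ | ⟨v, j⟩
    · exact hab rfl
    · rcases fin2cases j with rfl | rfl
      · obtain ⟨i, hv⟩ := hnonfocal v
        exact c_sep_z0 ψ (f i) hψ0 hv (hall i)
      · exact hnadj (mycz1 G v)
    · rcases fin2cases i with rfl | rfl
      · obtain ⟨i, hu⟩ := hnonfocal u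
        exact sep_symm (c_sep_z0 ψ (f i) hψ0 hu) (hall i)
      · exact hnadj (mycz1 G u).symm
    · rcases fin2cases i with rfl | rfl <;> rcases fin2cases j with rfl | rfl
      · have huv : u ≠ v := fun h => hab (by rw [h])
        have hng : ¬ G.Adj u v := fun h => hnadj ((myc00 G u v).mpr h)
        obtain ⟨i, hu, hv⟩ := hcov' u v huv hng
        exact c_sep_00 ψ (f i) hψinj hu hv huv (hall i)
      · have hng : ¬ G.Adj u v := fun h => hnadj ((myc01 G u v).mpr h)
        by_cases huv : u = v
        · subst huv
          obtain ⟨i, hu⟩ := hnonfocal u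
          exact c_sep_01 ψ (f i) hψ0 hu hu (hall i)
        · obtain ⟨i, hu, hv⟩ := hcov' u v huv hng
          exact c_sep_01 ψ (f i) hψ0 hu hv (hall i)
      · have hng : ¬ G.Adj u v := fun h => hnadj ((myc10 G u v).mpr h)
        by_cases huv : u = v
        · subst huv
          obtain ⟨i, hu⟩ := hnonfocal u
          exact sep_symm (c_sep_01 ψ (f i) hψ0 hu hu) (hall i)
        · obtain ⟨i, hv, hu⟩ := hcov' v u (Ne.symm huv) (fun h => hng h.symm)
          exact sep_symm (c_sep_01 ψ (f i) hψ0 hv hu) (hall i)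
      · have huv : u ≠ v := fun h => hab (by rw [h])
        by_cases hG : G.Adj u v
        · obtain ⟨i, hu⟩ := hnonfocal u
          have hv : v ∉ f i := hnotboth i u v hG hu
          exact c_sep_1out ψ (f i) hψ0 hu hv (hall i)
        · obtain ⟨i, hu, hv⟩ := hcov' u v huv hG
          exact c_sep_11 ψ (f i) hψinj hu hv huv (hall i)

lemma hasBoxRep_sum {W : Type*} (H : SimpleGraph W) (t m : ℕ)
    (LO HI : W → (Fin t ⊕ Fin m) → ℝ)
    (h : ∀ u v, u ≠ v → (H.Adj u v ↔ ∀ c, max (LO u c) (LO v c) ≤ min (HI u c) (HI v c))) :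
    HasBoxRep H (t + m) := by
  refine ⟨fun u i => LO u (finSumFinEquiv.symm i), fun u i => HI u (finSumFinEquiv.symm i), ?_⟩
  intro u v huv
  rw [h u v huv]
  constructor
  · intro h' i; exact h' _
  · intro h' c
    have := h' (finSumFinEquiv c)
    simpa using this

end BoxAux

open BoxAux

/-- for `G` with exactly `l` focal vertices,
`box(M₂(G)) ≤ θ(Gᶜ) + ⌈l/2⌉ + 1`, and `box(M₂(G)) ≤ θ(Gᶜ) + ⌈l/2⌉` if `l` is odd or zero. -/
theorem boxicity_mycielski_le {V : Type*} [Fintype V] (G : SimpleGraph V) (l : ℕ)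
    (hl : {v | IsFocal G v}.ncard = l) :
    boxicity (genMycielski G 2) ≤ edgeCliqueCoverNumber Gᶜ + (l + 1) / 2 + 1 ∧
    ((Odd l ∨ l = 0) →
      boxicity (genMycielski G 2) ≤ edgeCliqueCoverNumber Gᶜ + (l + 1) / 2) := by
  classical
  -- an injective map into (0,1)
  obtain ⟨ψ, hψinj, hψ0, hψ1⟩ : ∃ ψ : V → ℝ, Function.Injective ψ ∧
      (∀ v, 0 < ψ v) ∧ (∀ v, ψ v < 1) := by
    refine ⟨fun v => (((Fintype.equivFin V v : ℕ) : ℝ) + 1) / ((Fintype.card V : ℝ) + 1),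
      ?_, ?_, ?_⟩
    · intro u v h
      have hc : (0:ℝ) < (Fintype.card V : ℝ) + 1 := by positivity
      rw [div_eq_div_iff hc.ne' hc.ne'] at h
      have h2 : ((Fintype.equivFin V u : ℕ) : ℝ) = ((Fintype.equivFin V v : ℕ) : ℝ) := by
        have := mul_right_cancel₀ (ne_of_gt hc) h
        linarith
      have h3 : (Fintype.equivFin V u : ℕ) = (Fintype.equivFin V v : ℕ) := by exact_mod_cast h2
      exact (Fintype.equivFin V).injective (Fin.ext h3)
    · intro v
      positivity
    · intro v
      rw [div_lt_one (by positivity)]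
      have h4 : ((Fintype.equivFin V v : ℕ) : ℝ) < (Fintype.card V : ℝ) := by
        exact_mod_cast (Fintype.equivFin V v).isLt
      linarith
  -- a clique edge cover of Gᶜ of the optimal size
  have hne : {k | ∃ f : Fin k → Set V, (∀ i, Gᶜ.IsClique (f i)) ∧
      ∀ u v, Gᶜ.Adj u v → ∃ i, u ∈ f i ∧ v ∈ f i}.Nonempty := by
    refine ⟨Fintype.card (V × V), fun i =>
      (if Gᶜ.Adj ((Fintype.equivFin (V × V)).symm i).1 ((Fintype.equivFin (V × V)).symm i).2
        then {((Fintype.equivFin (V × V)).symm i).1, ((Fintype.equivFin (V × V)).symm i).2}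
        else (∅ : Set V)), ?_, ?_⟩
    · intro i
      dsimp only
      split_ifs with h
      · intro x hx y hy hxy
        simp only [Set.mem_insert_iff, Set.mem_singleton_iff] at hx hy
        rcases hx with rfl | rfl <;> rcases hy with rfl | rfl
        · exact absurd rfl hxy
        · exact h
        · exact h.symm
        · exact absurd rfl hxy
      · exact Set.pairwise_empty _
    · intro u v huv
      refine ⟨Fintype.equivFin (V × V) (u, v), ?_⟩
      simp [huv]
  obtain ⟨f, hfc, hfcov⟩ : ∃ f : Fin (edgeCliqueCoverNumber Gᶜ) → Set V,
      (∀ i, Gᶜ.IsClique (f i)) ∧ ∀ u v, Gᶜ.Adj u v → ∃ i, u ∈ f i ∧ v ∈ f i :=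
    Nat.sInf_mem hne
  by_cases hl0 : l = 0
  · -- no focal vertices
    subst hl0
    have hF : {v | IsFocal G v} = ∅ := by
      rw [← Set.ncard_eq_zero (Set.toFinite _)] at *
      exact hl
    have hnf : ∀ v : V, ¬ IsFocal G v := by
      intro v hv
      rw [Set.eq_empty_iff_forall_notMem] at hF
      exact hF v hv
    have hrep : HasBoxRep (genMycielski G 2) (edgeCliqueCoverNumber Gᶜ) :=
      ⟨fun a i => cliqueLo ψ (f i) a, fun a i => cliqueHi ψ (f i) a,
        main_iff0 G ψ hψ0 hψ1 hψinj f hfc hfcov hnf⟩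
    have hb : boxicity (genMycielski G 2) ≤ edgeCliqueCoverNumber Gᶜ := Nat.sInf_le hrep
    exact ⟨hb.trans (by omega), fun _ => hb.trans (by omega)⟩
  · -- at least one focal vertex
    have hlpos : 0 < l := Nat.pos_of_ne_zero hl0
    have hfin : ({v | IsFocal G v} : Set V).Finite := Set.toFinite _
    haveI := hfin.fintype
    have hcard : Fintype.card ↥{v | IsFocal G v} = l := by
      rw [← Nat.card_eq_fintype_card, Nat.card_coe_set_eq]
      exact hl
    let e := Fintype.equivFinOfCardEq hcard
    let g : ℕ → V := fun k => if h : k < l then (e.symm ⟨k, h⟩ : V) else (e.symm ⟨0, hlpos⟩ : V)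
    have hginj : ∀ k k', k < l → k' < l → g k = g k' → k = k' := by
      intro k k' hk hk' hgg
      simp only [g, dif_pos hk, dif_pos hk'] at hgg
      have h2 := e.symm.injective (Subtype.coe_injective hgg)
      simpa using congrArg Fin.val h2
    have hgsurj : ∀ x, IsFocal G x → ∃ k, k < l ∧ g k = x := by
      intro x hx
      refine ⟨(e ⟨x, hx⟩ : Fin l), (e ⟨x, hx⟩).isLt, ?_⟩
      simp only [g, dif_pos (e ⟨x, hx⟩).isLt, Fin.eta, Equiv.symm_apply_apply]
    have hiff := main_iff G ψ hψ0 hψ1 hψinj f hfc hfcov l hlpos g hginj hgsurj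
    have hrep : HasBoxRep (genMycielski G 2) (edgeCliqueCoverNumber Gᶜ + (l/2 + 1)) :=
      hasBoxRep_sum (genMycielski G 2) _ _ (fun a => mainLo ψ f l g a)
        (fun a => mainHi ψ f l g a) hiff
    have hb : boxicity (genMycielski G 2) ≤ edgeCliqueCoverNumber Gᶜ + (l/2 + 1) :=
      Nat.sInf_le hrep
    constructor
    · have h5 : edgeCliqueCoverNumber Gᶜ + (l/2 + 1) ≤
          edgeCliqueCoverNumber Gᶜ + ((l+1)/2 + 1) :=
        Nat.add_le_add_left (Nat.add_le_add_right (Nat.div_le_div_right (Nat.le_succ l)) 1) _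
      exact hb.trans (h5.trans (le_of_eq (by omega)))
    · rintro (⟨k, rfl⟩ | h0)
      · have h5 : (2*k+1)/2 + 1 = (2*k+1+1)/2 := by omega
        rw [← h5]
        exact hb.trans (le_of_eq (by omega))
      · exact absurd h0 hl0
end

section
/- Let K_{n_1,...,n_k} be a complete k-partite graph with exactly l focal vertices (i.e., exactly l of the parts have size 1). Then ⌈(2k−l)/2⌉ ≤ box(M_2(K_{n_1,...,n_k})) ≤ min{k, ⌈(2k−l)/2⌉ + 1}. In particular, if l is odd or l = 0, then box(M_2(K_{n_1,...,n_k})) = ⌈(2k−l)/2⌉. -/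
open SimpleGraph

namespace BoxMyc
open SimpleGraph

variable {k : ℕ} {n : Fin k → ℕ}

abbrev Vt (n : Fin k → ℕ) := (Σ i : Fin k, Fin (n i))

abbrev HG (n : Fin k → ℕ) := genMycielski (completeMultipartite fun i => Fin (n i)) 2

lemma cmAdj {u v : Vt n} : (completeMultipartite fun i => Fin (n i)).Adj u v ↔ u.1 ≠ v.1 :=
  Iff.rfl

lemma ne_of_fst {u v : Vt n} (h : u.1 ≠ v.1) : u ≠ v := fun e => h (by rw [e])

lemma adj00 {u v : Vt n} :
    (HG n).Adj (some (u, 0)) (some (v, 0)) ↔ u.1 ≠ v.1 := by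
  constructor
  · rintro ⟨hne, h | h⟩ <;> simp_all [cmAdj] <;> omega
  · intro h
    refine ⟨by simp [ne_of_fst h], Or.inl ?_⟩
    exact Or.inl ⟨rfl, rfl, h⟩


lemma adj01 {u v : Vt n} :
    (HG n).Adj (some (u, 0)) (some (v, 1)) ↔ u.1 ≠ v.1 := by
  constructor
  · rintro ⟨hne, h | h⟩ <;> simp_all [cmAdj] <;> omega
  · intro h
    exact ⟨by simp, Or.inl (Or.inr ⟨rfl, h⟩)⟩

lemma adj11 {u v : Vt n} : ¬ (HG n).Adj (some (u, 1)) (some (v, 1)) := by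
  rintro ⟨hne, h | h⟩ <;> simp_all

lemma adjz1 {v : Vt n} : (HG n).Adj none (some (v, 1)) := by
  refine ⟨by simp, Or.inr ?_⟩
  simp [genMycielski]

lemma adjz0 {v : Vt n} : ¬ (HG n).Adj none (some (v, 0)) := by
  rintro ⟨hne, h | h⟩ <;> simp_all [genMycielski]

lemma adj_cases {x y : Option (Vt n × Fin 2)} (h : (HG n).Adj x y) :
    (∃ u v : Vt n, u.1 ≠ v.1 ∧ ((x = some (u,0) ∧ y = some (v,0)) ∨
      (x = some (u,0) ∧ y = some (v,1)) ∨ (x = some (u,1) ∧ y = some (v,0)))) ∨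
    (∃ v : Vt n, (x = none ∧ y = some (v,1)) ∨ (x = some (v,1) ∧ y = none)) := by
  match x, y with
  | none, none => exact absurd rfl h.ne
  | none, some (v, j) =>
    rcases h with ⟨hne, hr | hr⟩
    · exact absurd hr (by simp [genMycielski])
    · right; exact ⟨v, Or.inl ⟨rfl, by
        have h1 : (j : ℕ) = 1 := hr
        have : j = 1 := by rw [Fin.ext_iff]; omega
        rw [this]⟩⟩
  | some (v, j), none =>
    rcases h with ⟨hne, hr | hr⟩
    · right; exact ⟨v, Or.inr ⟨by
        have h1 : (j : ℕ) = 1 := hr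
        have : j = 1 := by rw [Fin.ext_iff]; omega
        rw [this], rfl⟩⟩
    · exact absurd hr (by simp [genMycielski])
  | some (u, i), some (v, j) =>
    left
    have hs : ∀ (w : Vt n) (a c : Fin 2), (a:ℕ) = (c:ℕ) →
        (some (w,a) : Option (Vt n × Fin 2)) = some (w, c) := by
      intro w a c h
      have : a = c := Fin.ext h
      rw [this]
    have hi2 := i.isLt
    have hj2 := j.isLt
    rcases h with ⟨hne, hr | hr⟩
    · rcases hr with ⟨hij, hi0, ha⟩ | ⟨hj, ha⟩
      · subst hij
        exact ⟨u, v, cmAdj.mp ha, Or.inl ⟨hs u i 0 (by omega), hs v i 0 (by omega)⟩⟩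
      · exact ⟨u, v, cmAdj.mp ha, Or.inr (Or.inl ⟨hs u i 0 (by omega), hs v j 1 (by omega)⟩)⟩
    · rcases hr with ⟨hij, hi0, ha⟩ | ⟨hj, ha⟩
      · subst hij
        exact ⟨u, v, Ne.symm (cmAdj.mp ha), Or.inl ⟨hs u j 0 (by omega), hs v j 0 (by omega)⟩⟩
      · exact ⟨u, v, Ne.symm (cmAdj.mp ha),
          Or.inr (Or.inr ⟨hs u i 1 (by omega), hs v j 0 (by omega)⟩)⟩

end BoxMyc

namespace BoxMyc

/-- intervals `[a,b]` and `[c,d]` meet -/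
def Mt (a b c d : ℝ) : Prop := max a c ≤ min b d

lemma Mt.symm {a b c d : ℝ} (h : Mt a b c d) : Mt c d a b := by
  unfold Mt at *; rw [max_comm, min_comm]; exact h

lemma mt_iff {a b c d : ℝ} : Mt a b c d ↔ (a ≤ b ∧ a ≤ d) ∧ c ≤ b ∧ c ≤ d := by
  unfold Mt; rw [max_le_iff, le_min_iff, le_min_iff]

lemma mt_of {a b c d : ℝ} (h1 : a ≤ b) (h2 : a ≤ d) (h3 : c ≤ b) (h4 : c ≤ d) :
    Mt a b c d := mt_iff.mpr ⟨⟨h1, h2⟩, h3, h4⟩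

lemma not_mt_points {a b : ℝ} (h : a ≠ b) : ¬ Mt a a b b := by
  rcases lt_or_gt_of_ne h with h' | h' <;>
    · rw [mt_iff]; rintro ⟨⟨_, h1⟩, h2, _⟩; linarith

lemma disjoint_orient {aA bA aB bB : ℝ} (hA : aA ≤ bA) (hB : aB ≤ bB)
    (h : ¬ Mt aA bA aB bB) : bB < aA ∨ bA < aB := by
  by_contra hc
  push_neg at hc
  exact h (mt_of hA (by linarith [hc.1]) (by linarith [hc.2]) hB)

/-- the gap lemma -/
lemma gap {ax bx ay by' ap bp aq bq : ℝ}
    (hxy : ¬ Mt ax bx ay by') (hxp : Mt ax bx ap bp) (hyp : Mt ay by' ap bp)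
    (hxq : Mt ax bx aq bq) (hyq : Mt ay by' aq bq) : Mt ap bp aq bq := by
  obtain ⟨⟨h1, h2⟩, h3, h4⟩ := mt_iff.mp hxp
  obtain ⟨⟨h5, h6⟩, h7, h8⟩ := mt_iff.mp hyp
  obtain ⟨⟨g1, g2⟩, g3, g4⟩ := mt_iff.mp hxq
  obtain ⟨⟨g5, g6⟩, g7, g8⟩ := mt_iff.mp hyq
  rcases disjoint_orient h1 h5 hxy with h | h <;>
    exact mt_of (by linarith) (by linarith) (by linarith) (by linarith)

/-- three pairs `(A_x,B_x)`, each disjoint, with all cross `A-A`, `A-B`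
intersections, is impossible. -/
lemma three_pairs {aAu bAu aBu bBu aAv bAv aBv bBv aAw bAw aBw bBw : ℝ}
    (du : ¬ Mt aAu bAu aBu bBu) (dv : ¬ Mt aAv bAv aBv bBv) (dw : ¬ Mt aAw bAw aBw bBw)
    (uv : Mt aAu bAu aAv bAv) (uw : Mt aAu bAu aAw bAw) (vw : Mt aAv bAv aAw bAw)
    (uBv : Mt aAu bAu aBv bBv) (uBw : Mt aAu bAu aBw bBw)
    (vBu : Mt aAv bAv aBu bBu) (vBw : Mt aAv bAv aBw bBw)
    (wBu : Mt aAw bAw aBu bBu) (wBv : Mt aAw bAw aBv bBv) : False := by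
  obtain ⟨⟨p1, p2⟩, p3, p4⟩ := mt_iff.mp uv
  obtain ⟨⟨q1, q2⟩, q3, q4⟩ := mt_iff.mp uw
  obtain ⟨⟨r1, r2⟩, r3, r4⟩ := mt_iff.mp vw
  obtain ⟨⟨a1, a2⟩, a3, a4⟩ := mt_iff.mp uBv
  obtain ⟨⟨b1, b2⟩, b3, b4⟩ := mt_iff.mp uBw
  obtain ⟨⟨c1, c2⟩, c3, c4⟩ := mt_iff.mp vBu
  obtain ⟨⟨d1, d2⟩, d3, d4⟩ := mt_iff.mp vBw
  obtain ⟨⟨e1, e2⟩, e3, e4⟩ := mt_iff.mp wBu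
  obtain ⟨⟨f1, f2⟩, f3, f4⟩ := mt_iff.mp wBv
  have hu := disjoint_orient p1 c4 du
  have hv := disjoint_orient r1 a4 dv
  have hw := disjoint_orient q4 b4 dw
  rcases hu with h1 | h1 <;> rcases hv with h2 | h2 <;> rcases hw with h3 | h3 <;> linarith

end BoxMyc

namespace BoxMyc
open SimpleGraph

lemma hasBoxRep_of_index {V : Type*} (G : SimpleGraph V) {ι : Type*} [Fintype ι] {D : ℕ}
    (hcard : Fintype.card ι ≤ D) (lo hi : V → ι → ℝ)
    (P : ∀ u v, u ≠ v → (G.Adj u v ↔ ∀ i, max (lo u i) (lo v i) ≤ min (hi u i) (hi v i))) :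
    HasBoxRep G D := by
  classical
  obtain ⟨e⟩ : Nonempty (ι ↪ Fin D) := by
    refine Function.Embedding.nonempty_of_card_le ?_
    simpa using hcard
  refine ⟨fun v i => if h : ∃ a, e a = i then lo v h.choose else 0,
          fun v i => if h : ∃ a, e a = i then hi v h.choose else 0, ?_⟩
  intro u v huv
  rw [P u v huv]
  constructor
  · intro hp i
    by_cases h : ∃ a, e a = i
    · simp only [dif_pos h]
      exact hp _
    · simp only [dif_neg h]
      norm_num
  · intro hp a
    have hex : ∃ b, e b = e a := ⟨a, rfl⟩
    have h1 := hp (e a)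
    simp only [dif_pos hex] at h1
    have hc : hex.choose = a := e.injective hex.choose_spec
    rw [hc] at h1
    exact h1

end BoxMyc

namespace BoxMyc
open SimpleGraph

variable {k : ℕ} {n : Fin k → ℕ}

noncomputable def NN (n : Fin k → ℕ) : ℝ := ((∑ j, n j : ℕ) : ℝ)

lemma NN_nonneg : 0 ≤ NN n := Nat.cast_nonneg _

lemma snd_bound (u : Vt n) : ((u.2 : ℕ) : ℝ) + 1 ≤ NN n := by
  have h1 : (u.2 : ℕ) < n u.1 := u.2.isLt
  have h2 : n u.1 ≤ ∑ j, n j :=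
    Finset.single_le_sum (fun j _ => Nat.zero_le _) (Finset.mem_univ u.1)
  have h3 : (u.2 : ℕ) + 1 ≤ ∑ j, n j := by omega
  unfold NN
  exact_mod_cast h3

lemma snd_nonneg (u : Vt n) : (0:ℝ) ≤ ((u.2 : ℕ) : ℝ) := Nat.cast_nonneg _

lemma snd_ne {u v : Vt n} (hne : u ≠ v) (hfst : u.1 = v.1) :
    ((u.2 : ℕ) : ℝ) ≠ ((v.2 : ℕ) : ℝ) := by
  intro h
  have h2 : (u.2 : ℕ) = (v.2 : ℕ) := Nat.cast_injective h
  apply hne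
  rcases u with ⟨a, m⟩
  rcases v with ⟨b, m'⟩
  dsimp at hfst h2
  subst hfst
  simp only [Sigma.mk.inj_iff, heq_eq_eq, true_and]
  exact Fin.ext h2

noncomputable def lo1 (n : Fin k → ℕ) : Option (Vt n × Fin 2) → Fin k → ℝ
  | none, _ => -(2 + NN n)
  | some (u, 0), j => if u.1 = j then ((u.2 : ℕ) : ℝ) + 1 else -(2 + NN n)
  | some (u, 1), j => if u.1 = j then -(2 + ((u.2 : ℕ) : ℝ)) else 0

noncomputable def hi1 (n : Fin k → ℕ) : Option (Vt n × Fin 2) → Fin k → ℝ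
  | none, _ => 0
  | some (u, 0), j => if u.1 = j then ((u.2 : ℕ) : ℝ) + 1 else NN n + 1
  | some (u, 1), j => if u.1 = j then -(2 + ((u.2 : ℕ) : ℝ)) else NN n + 1

lemma e00 (j : Fin k) {u v : Vt n} (huv : u.1 ≠ v.1) :
    Mt (lo1 n (some (u,0)) j) (hi1 n (some (u,0)) j)
       (lo1 n (some (v,0)) j) (hi1 n (some (v,0)) j) := by
  have b1 := snd_bound u
  have b2 := snd_bound v
  have c1 := snd_nonneg u
  have c2 := snd_nonneg v
  have c3 := NN_nonneg (n := n)
  rcases eq_or_ne u.1 j with h1 | h1 <;> rcases eq_or_ne v.1 j with h2 | h2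
  · exact absurd (h1.trans h2.symm) huv
  all_goals simp only [lo1, hi1, if_pos, if_neg, h1, h2, if_true, if_false, ite_true,
    ite_false]
  all_goals exact mt_of (by linarith) (by linarith) (by linarith) (by linarith)

lemma e01 (j : Fin k) {u v : Vt n} (huv : u.1 ≠ v.1) :
    Mt (lo1 n (some (u,0)) j) (hi1 n (some (u,0)) j)
       (lo1 n (some (v,1)) j) (hi1 n (some (v,1)) j) := by
  have b1 := snd_bound u
  have b2 := snd_bound v
  have c1 := snd_nonneg u
  have c2 := snd_nonneg v
  have c3 := NN_nonneg (n := n)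
  rcases eq_or_ne u.1 j with h1 | h1 <;> rcases eq_or_ne v.1 j with h2 | h2
  · exact absurd (h1.trans h2.symm) huv
  all_goals simp only [lo1, hi1, h1, h2, if_true, if_false, ite_true, ite_false]
  all_goals exact mt_of (by linarith) (by linarith) (by linarith) (by linarith)

lemma ez1 (j : Fin k) (v : Vt n) :
    Mt (lo1 n none j) (hi1 n none j)
       (lo1 n (some (v,1)) j) (hi1 n (some (v,1)) j) := by
  have b2 := snd_bound v
  have c2 := snd_nonneg v
  have c3 := NN_nonneg (n := n)
  rcases eq_or_ne v.1 j with h2 | h2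
  all_goals simp only [lo1, hi1, h2, if_true, if_false, ite_true, ite_false]
  all_goals exact mt_of (by linarith) (by linarith) (by linarith) (by linarith)

lemma rep1 (hn : ∀ i, 1 ≤ n i) :
    ∀ u v : Option (Vt n × Fin 2), u ≠ v →
      ((HG n).Adj u v ↔ ∀ j, max (lo1 n u j) (lo1 n v j) ≤ min (hi1 n u j) (hi1 n v j)) := by
  intro x y hxy
  constructor
  · intro h j
    rcases adj_cases h with ⟨u, v, huv, hc | hc | hc⟩ | ⟨v, hc | hc⟩ <;>
      obtain ⟨rfl, rfl⟩ := hc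
    · exact e00 j huv
    · exact e01 j huv
    · exact (e01 j (Ne.symm huv)).symm
    · exact ez1 j v
    · exact (ez1 j v).symm
  · intro hall
    by_contra hadj
    suffices hs : ∃ j, ¬ Mt (lo1 n x j) (hi1 n x j) (lo1 n y j) (hi1 n y j) by
      obtain ⟨j, hj⟩ := hs
      exact hj (hall j)
    match x, y with
    | none, none => exact absurd rfl hxy
    | none, some (v, t) =>
      have ht : t = 0 := by
        rcases (by omega : (t:ℕ) = 0 ∨ (t:ℕ) = 1) with h | h
        · exact Fin.ext h
        · exact absurd (adjz1 (v := v)) (by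
            have : t = 1 := Fin.ext h
            rw [this] at hadj
            exact hadj)
      subst ht
      refine ⟨v.1, ?_⟩
      have c2 := snd_nonneg v
      have c3 := NN_nonneg (n := n)
      simp only [lo1, hi1, if_pos rfl, ite_true]
      rw [mt_iff]
      rintro ⟨⟨_, _⟩, h3, _⟩
      linarith
    | some (v, t), none =>
      have ht : t = 0 := by
        rcases (by omega : (t:ℕ) = 0 ∨ (t:ℕ) = 1) with h | h
        · exact Fin.ext h
        · exact absurd (adjz1 (v := v)).symm (by
            have : t = 1 := Fin.ext h
            rw [this] at hadj
            exact hadj)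
      subst ht
      refine ⟨v.1, ?_⟩
      have c2 := snd_nonneg v
      have c3 := NN_nonneg (n := n)
      simp only [lo1, hi1, if_pos rfl, ite_true]
      rw [mt_iff]
      rintro ⟨⟨_, h2⟩, _, _⟩
      linarith
    | some (u, s), some (v, t) =>
      have hs2 := s.isLt
      have ht2 := t.isLt
      rcases (by omega : (s:ℕ) = 0 ∨ (s:ℕ) = 1) with h | h <;>
        rcases (by omega : (t:ℕ) = 0 ∨ (t:ℕ) = 1) with h' | h'
      all_goals
        first
        | (have hs0 : s = 0 := Fin.ext h) | (have hs0 : s = 1 := Fin.ext h)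
      all_goals
        first
        | (have ht0 : t = 0 := Fin.ext h') | (have ht0 : t = 1 := Fin.ext h')
      all_goals subst hs0; subst ht0
      -- (0,0)
      · have hff : u.1 = v.1 := by
          by_contra hff
          exact hadj (adj00.2 hff)
        have hne : u ≠ v := fun e => hxy (by rw [e])
        refine ⟨u.1, ?_⟩
        simp only [lo1, hi1, if_pos rfl, if_pos hff.symm, ite_true]
        exact not_mt_points (by
          have := snd_ne hne hff
          intro hh
          apply this
          linarith)
      -- (0,1)
      · have hff : u.1 = v.1 := by
          by_contra hff
          exact hadj (adj01.2 hff)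
        refine ⟨u.1, ?_⟩
        have c1 := snd_nonneg u
        have c2 := snd_nonneg v
        simp only [lo1, hi1, if_pos rfl, if_pos hff.symm, ite_true]
        rw [mt_iff]
        rintro ⟨⟨_, h2⟩, _, _⟩
        linarith
      -- (1,0)
      · have hff : u.1 = v.1 := by
          by_contra hff
          exact hadj ((adj01.2 (Ne.symm hff)).symm)
        refine ⟨u.1, ?_⟩
        have c1 := snd_nonneg u
        have c2 := snd_nonneg v
        simp only [lo1, hi1, if_pos rfl, if_pos hff.symm, ite_true]
        rw [mt_iff]
        rintro ⟨⟨_, h2⟩, _, _⟩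
        linarith
      -- (1,1)
      · rcases eq_or_ne u.1 v.1 with hff | hff
        · have hne : u ≠ v := by
            intro e
            apply hxy
            rw [e]
          refine ⟨u.1, ?_⟩
          simp only [lo1, hi1, if_pos rfl, if_pos hff.symm, ite_true]
          exact not_mt_points (by
            have := snd_ne hne hff
            intro hh
            apply this
            linarith)
        · refine ⟨u.1, ?_⟩
          have c1 := snd_nonneg u
          simp only [lo1, hi1, if_pos rfl, if_neg (Ne.symm hff), ite_true, ite_false]
          rw [mt_iff]
          rintro ⟨⟨_, _⟩, h3, _⟩
          linarith

lemma rep_k (hn : ∀ i, 1 ≤ n i) : HasBoxRep (HG n) k := by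
  refine hasBoxRep_of_index _ (by simp) (lo1 n) (hi1 n) (rep1 hn)

end BoxMyc

namespace BoxMyc
open SimpleGraph

variable {k : ℕ} {n : Fin k → ℕ}

lemma not_mt_symm {a b c d : ℝ} (h : ¬ Mt a b c d) : ¬ Mt c d a b :=
  fun h' => h h'.symm

lemma singleton_vert {u v : Vt n} (h1 : n u.1 = 1) (hf : u.1 = v.1) : u = v := by
  rcases u with ⟨a, m⟩
  rcases v with ⟨b, m'⟩
  dsimp at h1 hf
  subst hf
  have hm := m.isLt
  have hm' := m'.isLt
  have : (m : ℕ) = (m' : ℕ) := by omega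
  exact congrArg _ (Fin.ext this)

/-! witnesses in a `lo1/hi1` (big part) coordinate -/

lemma w00 {u v : Vt n} (hne : u ≠ v) (hff : u.1 = v.1) :
    ¬ Mt (lo1 n (some (u,0)) u.1) (hi1 n (some (u,0)) u.1)
         (lo1 n (some (v,0)) u.1) (hi1 n (some (v,0)) u.1) := by
  simp only [lo1, hi1, if_pos rfl, if_pos hff.symm, ite_true]
  refine not_mt_points ?_
  have := snd_ne hne hff
  intro hh
  exact this (by linarith)

lemma w01 {u v : Vt n} (hff : u.1 = v.1) :
    ¬ Mt (lo1 n (some (u,0)) u.1) (hi1 n (some (u,0)) u.1)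
         (lo1 n (some (v,1)) u.1) (hi1 n (some (v,1)) u.1) := by
  have c1 := snd_nonneg u
  have c2 := snd_nonneg v
  simp only [lo1, hi1, if_pos rfl, if_pos hff.symm, ite_true]
  rw [mt_iff]
  rintro ⟨⟨_, h2⟩, _, _⟩
  linarith

lemma w11same {u v : Vt n} (hne : u ≠ v) (hff : u.1 = v.1) :
    ¬ Mt (lo1 n (some (u,1)) u.1) (hi1 n (some (u,1)) u.1)
         (lo1 n (some (v,1)) u.1) (hi1 n (some (v,1)) u.1) := by
  simp only [lo1, hi1, if_pos rfl, if_pos hff.symm, ite_true]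
  refine not_mt_points ?_
  have := snd_ne hne hff
  intro hh
  exact this (by linarith)

lemma w11diff {u v : Vt n} (hff : v.1 ≠ u.1) :
    ¬ Mt (lo1 n (some (u,1)) u.1) (hi1 n (some (u,1)) u.1)
         (lo1 n (some (v,1)) u.1) (hi1 n (some (v,1)) u.1) := by
  have c1 := snd_nonneg u
  simp only [lo1, hi1, if_pos rfl, if_neg hff, ite_true, ite_false]
  rw [mt_iff]
  rintro ⟨⟨_, _⟩, h3, _⟩
  linarith

lemma wz0 (v : Vt n) :
    ¬ Mt (lo1 n none v.1) (hi1 n none v.1)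
         (lo1 n (some (v,0)) v.1) (hi1 n (some (v,0)) v.1) := by
  have c2 := snd_nonneg v
  simp only [lo1, hi1, if_pos rfl, ite_true]
  rw [mt_iff]
  rintro ⟨⟨_, _⟩, h3, _⟩
  linarith

/-! the pair coordinate -/

noncomputable def loP (a b : Fin k) : Option (Vt n × Fin 2) → ℝ
  | none => 20
  | some (u, 0) => if u.1 = a then 22 else 0
  | some (u, 1) => if u.1 = a then 10 else if u.1 = b then 30 else 25

noncomputable def hiP (a b : Fin k) : Option (Vt n × Fin 2) → ℝ
  | none => 30
  | some (u, 0) => if u.1 = a then 100 else if u.1 = b then 28 else 100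
  | some (u, 1) => if u.1 = a then 20 else if u.1 = b then 40 else 25

lemma pe00 (a b : Fin k) (u v : Vt n) :
    Mt (loP a b (some (u,0))) (hiP a b (some (u,0)))
       (loP a b (some (v,0))) (hiP a b (some (v,0))) := by
  simp only [loP, hiP]
  rw [mt_iff]
  refine ⟨⟨?_, ?_⟩, ?_, ?_⟩ <;> try split_ifs
  all_goals norm_num

lemma pe01 (a b : Fin k) {u v : Vt n} (huv : u.1 ≠ v.1) :
    Mt (loP a b (some (u,0))) (hiP a b (some (u,0)))
       (loP a b (some (v,1))) (hiP a b (some (v,1))) := by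
  simp only [loP, hiP]
  rw [mt_iff]
  refine ⟨⟨?_, ?_⟩, ?_, ?_⟩ <;> try split_ifs
  all_goals
    first
    | (norm_num; done)
    | exact absurd (‹u.1 = a›.trans ‹v.1 = a›.symm) huv
    | exact absurd (‹u.1 = b›.trans ‹v.1 = b›.symm) huv
    | exact absurd (‹u.1 = c›.trans ‹v.1 = c›.symm) huv

lemma pez1 (a b : Fin k) (v : Vt n) :
    Mt (loP (n := n) a b none) (hiP (n := n) a b none)
       (loP a b (some (v,1))) (hiP a b (some (v,1))) := by
  simp only [loP, hiP]
  rw [mt_iff]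
  refine ⟨⟨?_, ?_⟩, ?_, ?_⟩ <;> try split_ifs
  all_goals norm_num

/-! the extra coordinate -/

noncomputable def loE (c : Fin k) : Option (Vt n × Fin 2) → ℝ
  | none => 10
  | some (u, 0) => if u.1 = c then 50 else 12
  | some (_, 1) => 10

noncomputable def hiE (c : Fin k) : Option (Vt n × Fin 2) → ℝ
  | none => 10
  | some (_, 0) => 100
  | some (u, 1) => if u.1 = c then 15 else 60

lemma ee00 (c : Fin k) (u v : Vt n) :
    Mt (loE c (some (u,0))) (hiE c (some (u,0)))
       (loE c (some (v,0))) (hiE c (some (v,0))) := by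
  simp only [loE, hiE]
  rw [mt_iff]
  refine ⟨⟨?_, ?_⟩, ?_, ?_⟩ <;> try split_ifs
  all_goals norm_num

lemma ee01 (c : Fin k) {u v : Vt n} (huv : u.1 ≠ v.1) :
    Mt (loE c (some (u,0))) (hiE c (some (u,0)))
       (loE c (some (v,1))) (hiE c (some (v,1))) := by
  simp only [loE, hiE]
  rw [mt_iff]
  refine ⟨⟨?_, ?_⟩, ?_, ?_⟩ <;> try split_ifs
  all_goals
    first
    | (norm_num; done)
    | exact absurd (‹u.1 = a›.trans ‹v.1 = a›.symm) huv
    | exact absurd (‹u.1 = b›.trans ‹v.1 = b›.symm) huv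
    | exact absurd (‹u.1 = c›.trans ‹v.1 = c›.symm) huv

lemma eez1 (c : Fin k) (v : Vt n) :
    Mt (loE (n := n) c none) (hiE (n := n) c none)
       (loE c (some (v,1))) (hiE c (some (v,1))) := by
  simp only [loE, hiE]
  rw [mt_iff]
  refine ⟨⟨?_, ?_⟩, ?_, ?_⟩ <;> try split_ifs
  all_goals norm_num

end BoxMyc

namespace BoxMyc
open SimpleGraph

variable {k : ℕ} {n : Fin k → ℕ}

def saF {l : ℕ} (σ : Fin l → Fin k) (p : Fin (l/2)) : Fin k :=
  σ ⟨2*p.1, by have := p.2; omega⟩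

def sbF {l : ℕ} (σ : Fin l → Fin k) (p : Fin (l/2)) : Fin k :=
  σ ⟨2*p.1+1, by have := p.2; omega⟩

def csF {l : ℕ} (σ : Fin l → Fin k) (hl1 : 1 ≤ l) : Fin k :=
  σ ⟨l-1, by omega⟩

set_option maxHeartbeats 2000000 in
lemma rep2 (hn : ∀ i, 1 ≤ n i) {l : ℕ}
    (hl : (Finset.univ.filter (fun j => n j = 1)).card = l) (hl1 : 1 ≤ l) :
    HasBoxRep (HG n) ((Finset.univ.filter (fun j => ¬ n j = 1)).card + (l / 2 + 1)) := by
  classical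
  set T : Finset (Fin k) := Finset.univ.filter (fun j => n j = 1) with hTdef
  let σe := T.orderEmbOfFin hl
  let σ : Fin l → Fin k := fun t => σe t
  have hσ1 : ∀ t, n (σ t) = 1 := fun t =>
    (Finset.mem_filter.1 (T.orderEmbOfFin_mem hl t)).2
  have hσinj : Function.Injective σ := fun t t' h => σe.injective h
  have hσsurj : ∀ j, n j = 1 → ∃ t, σ t = j := by
    intro j hj
    have hmem : j ∈ T := Finset.mem_filter.2 ⟨Finset.mem_univ _, hj⟩
    have hr : j ∈ Set.range σe := by
      rw [Finset.range_orderEmbOfFin]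
      exact hmem
    obtain ⟨t, ht⟩ := hr
    exact ⟨t, ht⟩
  have hbigOf : ∀ {u v : Vt n}, u ≠ v → u.1 = v.1 → ¬ n u.1 = 1 :=
    fun hne hf h1 => hne (singleton_vert h1 hf)
  -- the index type
  refine hasBoxRep_of_index (ι := {j : Fin k // ¬ n j = 1} ⊕ (Fin (l/2) ⊕ Unit)) _ ?_
    (fun x i => Sum.elim (fun jb : {j : Fin k // ¬ n j = 1} => lo1 n x jb.1)
      (Sum.elim (fun p : Fin (l/2) => loP (saF σ p) (sbF σ p) x)
        (fun _ : Unit => loE (csF σ hl1) x)) i)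
    (fun x i => Sum.elim (fun jb : {j : Fin k // ¬ n j = 1} => hi1 n x jb.1)
      (Sum.elim (fun p : Fin (l/2) => hiP (saF σ p) (sbF σ p) x)
        (fun _ : Unit => hiE (csF σ hl1) x)) i) ?_
  · have hcount : Fintype.card ({j : Fin k // ¬ n j = 1} ⊕ (Fin (l / 2) ⊕ Unit)) =
        (Finset.univ.filter (fun j => ¬ n j = 1)).card + (l / 2 + 1) := by
      simp [Fintype.card_subtype]
    exact hcount.le
  intro x y hxy
  constructor
  · intro h i
    rcases adj_cases h with ⟨u, v, huv, hc | hc | hc⟩ | ⟨v, hc | hc⟩ <;>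
      obtain ⟨rfl, rfl⟩ := hc <;> rcases i with jb | p | -
    · exact e00 jb.1 huv
    · exact pe00 _ _ u v
    · exact ee00 _ u v
    · exact e01 jb.1 huv
    · exact pe01 _ _ huv
    · exact ee01 _ huv
    · exact (e01 jb.1 (Ne.symm huv)).symm
    · exact (pe01 _ _ (Ne.symm huv)).symm
    · exact (ee01 _ (Ne.symm huv)).symm
    · exact ez1 jb.1 v
    · exact pez1 _ _ v
    · exact eez1 _ v
    · exact (ez1 jb.1 v).symm
    · exact (pez1 _ _ v).symm
    · exact (eez1 _ v).symm
  · intro hall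
    by_contra hadj
    -- key witnesses for singleton parts
    have key01 : ∀ (u v : Vt n), u.1 = v.1 → n u.1 = 1 →
        ∃ i : {j : Fin k // ¬ n j = 1} ⊕ (Fin (l/2) ⊕ Unit),
          ¬ Mt (Sum.elim (fun jb : {j : Fin k // ¬ n j = 1} => lo1 n (some (u,0)) jb.1)
                  (Sum.elim (fun p => loP (saF σ p) (sbF σ p) (some (u,0)))
                    (fun _ => loE (csF σ hl1) (some (u,0)))) i)
               (Sum.elim (fun jb : {j : Fin k // ¬ n j = 1} => hi1 n (some (u,0)) jb.1)
                  (Sum.elim (fun p => hiP (saF σ p) (sbF σ p) (some (u,0)))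
                    (fun _ => hiE (csF σ hl1) (some (u,0)))) i)
               (Sum.elim (fun jb : {j : Fin k // ¬ n j = 1} => lo1 n (some (v,1)) jb.1)
                  (Sum.elim (fun p => loP (saF σ p) (sbF σ p) (some (v,1)))
                    (fun _ => loE (csF σ hl1) (some (v,1)))) i)
               (Sum.elim (fun jb : {j : Fin k // ¬ n j = 1} => hi1 n (some (v,1)) jb.1)
                  (Sum.elim (fun p => hiP (saF σ p) (sbF σ p) (some (v,1)))
                    (fun _ => hiE (csF σ hl1) (some (v,1)))) i) := by
      intro u v hf h1
      obtain ⟨t, ht⟩ := hσsurj u.1 h1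
      by_cases hp : t.1 < 2*(l/2)
      · refine ⟨Sum.inr (Sum.inl ⟨t.1/2, by omega⟩), ?_⟩
        dsimp only [Sum.elim]
        by_cases hev : t.1 % 2 = 0
        · have ha : saF σ (⟨t.1/2, by omega⟩ : Fin (l/2)) = u.1 := by
            rw [← ht]
            exact congrArg σ (Fin.ext (by simp; omega))
          simp only [loP, hiP, if_pos ha.symm, if_pos (hf ▸ ha.symm : v.1 = _), ite_true]
          rw [mt_iff]
          norm_num
        · have hb : sbF σ (⟨t.1/2, by omega⟩ : Fin (l/2)) = u.1 := by
            rw [← ht]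
            exact congrArg σ (Fin.ext (by simp; omega))
          have hna : u.1 ≠ saF σ (⟨t.1/2, by omega⟩ : Fin (l/2)) := by
            rw [← ht]
            intro hh
            have h2 := congrArg Fin.val (hσinj hh)
            simp at h2
            omega
          simp only [loP, hiP, if_neg hna, if_pos hb.symm, if_neg (hf ▸ hna : ¬ v.1 = _),
            if_pos (hf ▸ hb.symm : v.1 = _), ite_true, ite_false]
          rw [mt_iff]
          norm_num
      · have hcs : csF σ hl1 = u.1 := by
          rw [← ht]
          exact congrArg σ (Fin.ext (by simp; omega))
        refine ⟨Sum.inr (Sum.inr ()), ?_⟩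
        dsimp only [Sum.elim]
        simp only [loE, hiE, if_pos hcs.symm, if_pos (hf ▸ hcs.symm : v.1 = _), ite_true]
        rw [mt_iff]
        norm_num
    have key11 : ∀ (u v : Vt n), u ≠ v → n u.1 = 1 → n v.1 = 1 →
        ∃ i : {j : Fin k // ¬ n j = 1} ⊕ (Fin (l/2) ⊕ Unit),
          ¬ Mt (Sum.elim (fun jb : {j : Fin k // ¬ n j = 1} => lo1 n (some (u,1)) jb.1)
                  (Sum.elim (fun p => loP (saF σ p) (sbF σ p) (some (u,1)))
                    (fun _ => loE (csF σ hl1) (some (u,1)))) i)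
               (Sum.elim (fun jb : {j : Fin k // ¬ n j = 1} => hi1 n (some (u,1)) jb.1)
                  (Sum.elim (fun p => hiP (saF σ p) (sbF σ p) (some (u,1)))
                    (fun _ => hiE (csF σ hl1) (some (u,1)))) i)
               (Sum.elim (fun jb : {j : Fin k // ¬ n j = 1} => lo1 n (some (v,1)) jb.1)
                  (Sum.elim (fun p => loP (saF σ p) (sbF σ p) (some (v,1)))
                    (fun _ => loE (csF σ hl1) (some (v,1)))) i)
               (Sum.elim (fun jb : {j : Fin k // ¬ n j = 1} => hi1 n (some (v,1)) jb.1)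
                  (Sum.elim (fun p => hiP (saF σ p) (sbF σ p) (some (v,1)))
                    (fun _ => hiE (csF σ hl1) (some (v,1)))) i) := by
      intro u v hne h1 h2
      have hf : u.1 ≠ v.1 := fun h => hne (singleton_vert h1 h)
      obtain ⟨tu, htu⟩ := hσsurj u.1 h1
      obtain ⟨tv, htv⟩ := hσsurj v.1 h2
      have htne : tu ≠ tv := fun h => hf (by rw [← htu, ← htv, h])
      by_cases hp : tu.1 < 2*(l/2)
      · refine ⟨Sum.inr (Sum.inl ⟨tu.1/2, by omega⟩), ?_⟩
        dsimp only [Sum.elim]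
        by_cases hev : tu.1 % 2 = 0
        · have ha : saF σ (⟨tu.1/2, by omega⟩ : Fin (l/2)) = u.1 := by
            rw [← htu]
            exact congrArg σ (Fin.ext (by simp; omega))
          have hvna : ¬ v.1 = saF σ (⟨tu.1/2, by omega⟩ : Fin (l/2)) := by
            rw [ha]
            exact fun hh => hf hh.symm
          rcases eq_or_ne v.1 (sbF σ (⟨tu.1/2, by omega⟩ : Fin (l/2))) with hvb | hvb
          · simp only [loP, hiP, if_pos ha.symm, if_neg hvna, if_pos hvb, ite_true, ite_false]
            rw [mt_iff]
            norm_num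
          · simp only [loP, hiP, if_pos ha.symm, if_neg hvna, if_neg hvb, ite_true, ite_false]
            rw [mt_iff]
            norm_num
        · have hb : sbF σ (⟨tu.1/2, by omega⟩ : Fin (l/2)) = u.1 := by
            rw [← htu]
            exact congrArg σ (Fin.ext (by simp; omega))
          have hna : ¬ u.1 = saF σ (⟨tu.1/2, by omega⟩ : Fin (l/2)) := by
            rw [← htu]
            intro hh
            have h3 := congrArg Fin.val (hσinj hh)
            simp at h3
            omega
          have hvnb : ¬ v.1 = sbF σ (⟨tu.1/2, by omega⟩ : Fin (l/2)) := by
            rw [hb]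
            exact fun hh => hf hh.symm
          rcases eq_or_ne v.1 (saF σ (⟨tu.1/2, by omega⟩ : Fin (l/2))) with hva | hva
          · simp only [loP, hiP, if_neg hna, if_pos hb.symm, if_pos hva, ite_true, ite_false]
            rw [mt_iff]
            norm_num
          · simp only [loP, hiP, if_neg hna, if_pos hb.symm, if_neg hva, if_neg hvnb,
              ite_true, ite_false]
            rw [mt_iff]
            norm_num
      · have hlodd : l % 2 = 1 := by have := tu.2; omega
        have htu1 : tu.1 = l - 1 := by have := tu.2; omega
        have htvp : tv.1 < 2*(l/2) := by
          have h4 := tv.2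
          have hvne : tv.1 ≠ tu.1 := fun h => htne (Fin.ext h).symm
          omega
        refine ⟨Sum.inr (Sum.inl ⟨tv.1/2, by omega⟩), ?_⟩
        dsimp only [Sum.elim]
        have hua : ¬ u.1 = saF σ (⟨tv.1/2, by omega⟩ : Fin (l/2)) := by
          rw [← htu]
          intro hh
          have h3 := congrArg Fin.val (hσinj hh)
          simp at h3
          omega
        have hub : ¬ u.1 = sbF σ (⟨tv.1/2, by omega⟩ : Fin (l/2)) := by
          rw [← htu]
          intro hh
          have h3 := congrArg Fin.val (hσinj hh)
          simp at h3
          omega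
        by_cases hev : tv.1 % 2 = 0
        · have hva : saF σ (⟨tv.1/2, by omega⟩ : Fin (l/2)) = v.1 := by
            rw [← htv]
            exact congrArg σ (Fin.ext (by simp; omega))
          simp only [loP, hiP, if_neg hua, if_neg hub, if_pos hva.symm, ite_true, ite_false]
          rw [mt_iff]
          norm_num
        · have hvb : sbF σ (⟨tv.1/2, by omega⟩ : Fin (l/2)) = v.1 := by
            rw [← htv]
            exact congrArg σ (Fin.ext (by simp; omega))
          have hvna : ¬ v.1 = saF σ (⟨tv.1/2, by omega⟩ : Fin (l/2)) := by
            intro hh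
            have h5 : saF σ (⟨tv.1/2, by omega⟩ : Fin (l/2)) =
                sbF σ (⟨tv.1/2, by omega⟩ : Fin (l/2)) := hh.symm.trans hvb.symm
            have h3 := congrArg Fin.val (hσinj h5)
            simp at h3
          simp only [loP, hiP, if_neg hua, if_neg hub, if_neg hvna, if_pos hvb.symm,
            ite_true, ite_false]
          rw [mt_iff]
          norm_num
    suffices hs : ∃ i : {j : Fin k // ¬ n j = 1} ⊕ (Fin (l/2) ⊕ Unit),
        ¬ Mt (Sum.elim (fun jb : {j : Fin k // ¬ n j = 1} => lo1 n x jb.1)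
                  (Sum.elim (fun p => loP (saF σ p) (sbF σ p) x)
                    (fun _ => loE (csF σ hl1) x)) i)
             (Sum.elim (fun jb : {j : Fin k // ¬ n j = 1} => hi1 n x jb.1)
                  (Sum.elim (fun p => hiP (saF σ p) (sbF σ p) x)
                    (fun _ => hiE (csF σ hl1) x)) i)
             (Sum.elim (fun jb : {j : Fin k // ¬ n j = 1} => lo1 n y jb.1)
                  (Sum.elim (fun p => loP (saF σ p) (sbF σ p) y)
                    (fun _ => loE (csF σ hl1) y)) i)
             (Sum.elim (fun jb : {j : Fin k // ¬ n j = 1} => hi1 n y jb.1)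
                  (Sum.elim (fun p => hiP (saF σ p) (sbF σ p) y)
                    (fun _ => hiE (csF σ hl1) y)) i) by
      obtain ⟨i, hi⟩ := hs
      exact hi (hall i)
    match x, y with
    | none, none => exact absurd rfl hxy
    | none, some (v, t) =>
      have ht : t = 0 := by
        rcases (by omega : (t:ℕ) = 0 ∨ (t:ℕ) = 1) with h | h
        · exact Fin.ext h
        · exact absurd (adjz1 (v := v)) (by
            have : t = 1 := Fin.ext h
            rw [this] at hadj
            exact hadj)
      subst ht
      refine ⟨Sum.inr (Sum.inr ()), ?_⟩
      dsimp only [Sum.elim]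
      rcases eq_or_ne v.1 (csF σ hl1) with h | h <;>
        · simp only [loE, hiE, h, if_true, if_false, ite_true, ite_false]
          rw [mt_iff]
          norm_num
    | some (v, t), none =>
      have ht : t = 0 := by
        rcases (by omega : (t:ℕ) = 0 ∨ (t:ℕ) = 1) with h | h
        · exact Fin.ext h
        · exact absurd (adjz1 (v := v)).symm (by
            have : t = 1 := Fin.ext h
            rw [this] at hadj
            exact hadj)
      subst ht
      refine ⟨Sum.inr (Sum.inr ()), ?_⟩
      dsimp only [Sum.elim]
      rcases eq_or_ne v.1 (csF σ hl1) with h | h <;>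
        · simp only [loE, hiE, h, if_true, if_false, ite_true, ite_false]
          rw [mt_iff]
          norm_num
    | some (u, s), some (v, t) =>
      have hs2 := s.isLt
      have ht2 := t.isLt
      rcases (by omega : (s:ℕ) = 0 ∨ (s:ℕ) = 1) with h | h <;>
        rcases (by omega : (t:ℕ) = 0 ∨ (t:ℕ) = 1) with h' | h'
      all_goals
        first
        | (have hs0 : s = 0 := Fin.ext h) | (have hs0 : s = 1 := Fin.ext h)
      all_goals
        first
        | (have ht0 : t = 0 := Fin.ext h') | (have ht0 : t = 1 := Fin.ext h')
      all_goals subst hs0; subst ht0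
      -- (0,0)
      · have hff : u.1 = v.1 := by
          by_contra hff
          exact hadj (adj00.2 hff)
        have hne : u ≠ v := fun e => hxy (by rw [e])
        exact ⟨Sum.inl ⟨u.1, hbigOf hne hff⟩, w00 hne hff⟩
      -- (0,1)
      · have hff : u.1 = v.1 := by
          by_contra hff
          exact hadj (adj01.2 hff)
        by_cases h1 : n u.1 = 1
        · exact key01 u v hff h1
        · exact ⟨Sum.inl ⟨u.1, h1⟩, w01 hff⟩
      -- (1,0)
      · have hff : u.1 = v.1 := by
          by_contra hff
          exact hadj ((adj01.2 (Ne.symm hff)).symm)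
        by_cases h1 : n v.1 = 1
        · obtain ⟨i, hi⟩ := key01 v u hff.symm h1
          exact ⟨i, not_mt_symm hi⟩
        · exact ⟨Sum.inl ⟨v.1, h1⟩, not_mt_symm (w01 hff.symm)⟩
      -- (1,1)
      · have hne : u ≠ v := fun e => hxy (by rw [e])
        by_cases h1 : n u.1 = 1
        · by_cases h2 : n v.1 = 1
          · exact key11 u v hne h1 h2
          · have hf : u.1 ≠ v.1 := by
              intro h
              rw [h] at h1
              exact h2 h1
            exact ⟨Sum.inl ⟨v.1, h2⟩, not_mt_symm (w11diff hf)⟩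
        · rcases eq_or_ne u.1 v.1 with hff | hff
          · exact ⟨Sum.inl ⟨u.1, h1⟩, w11same hne hff⟩
          · exact ⟨Sum.inl ⟨u.1, h1⟩, w11diff (Ne.symm hff)⟩

end BoxMyc

namespace BoxMyc
open SimpleGraph

variable {k : ℕ} {n : Fin k → ℕ}

lemma lower_bound (hn : ∀ i, 1 ≤ n i) {D : ℕ}
    (lo hi : Option (Vt n × Fin 2) → Fin D → ℝ)
    (P : ∀ u v : Option (Vt n × Fin 2), u ≠ v →
      ((HG n).Adj u v ↔ ∀ i, max (lo u i) (lo v i) ≤ min (hi u i) (hi v i))) :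
    (Finset.univ.filter (fun j => ¬ (n j = 1))).card
      + ((Finset.univ.filter (fun j => n j = 1)).card + 1) / 2 ≤ D := by
  classical
  let M : Fin D → Option (Vt n × Fin 2) → Option (Vt n × Fin 2) → Prop :=
    fun i x y => Mt (lo x i) (hi x i) (lo y i) (hi y i)
  have hE : ∀ {x y : Option (Vt n × Fin 2)}, (HG n).Adj x y → ∀ i, M i x y := by
    intro x y h i
    exact ((P x y h.ne).1 h) i
  have hNE : ∀ {x y : Option (Vt n × Fin 2)}, x ≠ y → ¬ (HG n).Adj x y →
      ∃ i, ¬ M i x y := by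
    intro x y hne hna
    by_contra hcon
    push_neg at hcon
    exact hna ((P x y hne).2 hcon)
  let w : Fin k → Vt n := fun j => ⟨j, ⟨0, hn j⟩⟩
  have hc0 : ∀ j : Fin k, ∃ i, ¬ M i (some (w j, 0)) (some (w j, 1)) := by
    intro j
    refine hNE ?_ ?_
    · intro h
      have h1 := Option.some_injective _ h
      exact (by decide : (0 : Fin 2) ≠ 1) (congrArg Prod.snd h1)
    · rw [adj01]
      simp
  choose c hcM using hc0
  have hf0 : ∀ j : Fin k, ∀ h2 : 2 ≤ n j,
      ∃ i, ¬ M i (some (w j, 0)) (some (⟨j, ⟨1, h2⟩⟩, 0)) := by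
    intro j h2
    refine hNE ?_ ?_
    · intro h
      have h1 := congrArg Prod.fst (Option.some_injective _ h)
      rw [Sigma.mk.inj_iff] at h1
      have h3 := eq_of_heq h1.2
      simp [Fin.ext_iff] at h3
    · rw [adj00]
      simp [w]
  choose f hfM using hf0
  have hgap : ∀ (j : Fin k) (h2 : 2 ≤ n j) (i : Fin D),
      ¬ M i (some (w j, 0)) (some (⟨j, ⟨1, h2⟩⟩, 0)) →
      ∀ (p q : Option (Vt n × Fin 2)),
        (HG n).Adj (some (w j, 0)) p → (HG n).Adj (some (⟨j, ⟨1, h2⟩⟩, 0)) p →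
        (HG n).Adj (some (w j, 0)) q → (HG n).Adj (some (⟨j, ⟨1, h2⟩⟩, 0)) q →
        M i p q := by
    intro j h2 i hdis p q h1 h2' h3 h4
    exact gap hdis (hE h1 i) (hE h2' i) (hE h3 i) (hE h4 i)
  have wfst : ∀ j, (w j).1 = j := fun j => rfl
  set S : Finset (Fin k) := Finset.univ.filter (fun j => ¬ (n j = 1)) with hSdef
  set T : Finset (Fin k) := Finset.univ.filter (fun j => n j = 1) with hTdef
  have hbig : ∀ j ∈ S, 2 ≤ n j := by
    intro j hj
    have := (Finset.mem_filter.1 hj).2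
    have := hn j
    omega
  let F : Fin k → Fin D := fun j => if h : 2 ≤ n j then f j h else c j
  have hFM : ∀ j (h : 2 ≤ n j), ¬ M (F j) (some (w j, 0)) (some (⟨j, ⟨1, h⟩⟩, 0)) := by
    intro j h
    simp only [F, dif_pos h]
    exact hfM j h
  have hinj : Set.InjOn F S := by
    intro j hj j' hj' he
    by_contra hne
    have h2 := hbig j hj
    have h2' := hbig j' hj'
    have hM : M (F j) (some (w j', 0)) (some (⟨j', ⟨1, h2'⟩⟩, 0)) := by
      refine hgap j h2 (F j) (hFM j h2) _ _ ?_ ?_ ?_ ?_ <;>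
        · rw [adj00]
          simp only [wfst]
          first
            | exact hne
            | exact fun hh => hne hh.symm
            | exact fun hh => hne hh
    rw [he] at hM
    exact hFM j' h2' hM
  have hdisj : ∀ j ∈ S, ∀ j' ∈ T, c j' ≠ F j := by
    intro j hj j' hj' he
    have h2 := hbig j hj
    have hj'1 : n j' = 1 := (Finset.mem_filter.1 hj').2
    have hne : j' ≠ j := by
      intro h
      rw [h] at hj'1
      omega
    have hM : M (F j) (some (w j', 0)) (some (w j', 1)) := by
      refine hgap j h2 (F j) (hFM j h2) _ _ ?_ ?_ ?_ ?_
      · rw [adj00]; simp only [wfst]; exact Ne.symm hne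
      · rw [adj00]; simp only [wfst]; exact Ne.symm hne
      · rw [adj01]; simp only [wfst]; exact Ne.symm hne
      · rw [adj01]; simp only [wfst]; exact Ne.symm hne
    rw [← he] at hM
    exact hcM j' hM
  have hfib : ∀ i : Fin D, (T.filter (fun j => c j = i)).card ≤ 2 := by
    intro i
    by_contra hcard
    push_neg at hcard
    obtain ⟨t, hts, htc⟩ := Finset.exists_subset_card_eq
      (by omega : 3 ≤ (T.filter (fun j => c j = i)).card)
    obtain ⟨j1, j2, j3, h12, h13, h23, rfl⟩ := Finset.card_eq_three.1 htc
    have m1 : j1 ∈ T.filter (fun j => c j = i) := hts (by simp)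
    have m2 : j2 ∈ T.filter (fun j => c j = i) := hts (by simp)
    have m3 : j3 ∈ T.filter (fun j => c j = i) := hts (by simp)
    have c1 : c j1 = i := (Finset.mem_filter.1 m1).2
    have c2 : c j2 = i := (Finset.mem_filter.1 m2).2
    have c3 : c j3 = i := (Finset.mem_filter.1 m3).2
    have d1 := hcM j1; rw [c1] at d1
    have d2 := hcM j2; rw [c2] at d2
    have d3 := hcM j3; rw [c3] at d3
    have A00 : ∀ (a b : Fin k), a ≠ b → M i (some (w a, 0)) (some (w b, 0)) :=
      fun a b hab => hE (adj00.2 hab) i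
    have A01 : ∀ (a b : Fin k), a ≠ b → M i (some (w a, 0)) (some (w b, 1)) :=
      fun a b hab => hE (adj01.2 hab) i
    exact three_pairs d1 d2 d3 (A00 _ _ h12) (A00 _ _ h13) (A00 _ _ h23)
      (A01 _ _ h12) (A01 _ _ h13) (A01 _ _ (Ne.symm h12)) (A01 _ _ h23)
      (A01 _ _ (Ne.symm h13)) (A01 _ _ (Ne.symm h23))
  have hXc : (S.image F).card = S.card := Finset.card_image_of_injOn hinj
  have hYc : T.card ≤ 2 * (T.image c).card :=
    Finset.card_le_mul_card_image (f := c) T 2 (fun a _ => hfib a)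
  have hXY : Disjoint (S.image F) (T.image c) := by
    rw [Finset.disjoint_left]
    intro i hiX hiY
    obtain ⟨j, hj, rfl⟩ := Finset.mem_image.1 hiX
    obtain ⟨j', hj', he⟩ := Finset.mem_image.1 hiY
    exact hdisj j hj j' hj' he
  have hcard : (S.image F).card + (T.image c).card ≤ D := by
    have h1 := Finset.card_le_univ ((S.image F) ∪ (T.image c))
    rw [Finset.card_union_of_disjoint hXY] at h1
    simpa using h1
  omega
end BoxMyc

/-- bounds on the boxicity of the Mycielski graph of a complete
`k`-partite graph with exactly `l` parts of size 1 (i.e. `l` focal vertices). -/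
theorem boxicity_mycielski_completeMultipartite (k l : ℕ) (n : Fin k → ℕ)
    (hn : ∀ i, 1 ≤ n i)
    (hl : (Finset.univ.filter (fun i => n i = 1)).card = l) :
    (2 * k - l + 1) / 2 ≤
        boxicity (genMycielski (completeMultipartite (fun i => Fin (n i))) 2) ∧
    boxicity (genMycielski (completeMultipartite (fun i => Fin (n i))) 2) ≤
        min k ((2 * k - l + 1) / 2 + 1) ∧
    ((Odd l ∨ l = 0) →
      boxicity (genMycielski (completeMultipartite (fun i => Fin (n i))) 2) =
        (2 * k - l + 1) / 2) := by
  classical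
  have hlk : l ≤ k := by
    rw [← hl]
    have h1 := Finset.card_filter_le (Finset.univ : Finset (Fin k)) (fun i => n i = 1)
    simpa using h1
  have hsum := Finset.card_filter_add_card_filter_not
    (s := (Finset.univ : Finset (Fin k))) (p := fun j => n j = 1)
  have hu : (Finset.univ : Finset (Fin k)).card = k := by simp
  have hSc : (Finset.univ.filter (fun j => ¬ n j = 1)).card = k - l := by omega
  have hmemk : HasBoxRep (genMycielski (completeMultipartite (fun i => Fin (n i))) 2) k :=
    BoxMyc.rep_k hn
  set B := boxicity (genMycielski (completeMultipartite (fun i => Fin (n i))) 2) with hB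
  have hub1 : B ≤ k := Nat.sInf_le hmemk
  have hlb : k - l + (l + 1) / 2 ≤ B := by
    apply le_csInf ⟨k, by exact hmemk⟩
    intro D hD
    obtain ⟨lo, hi, P⟩ := hD
    have h2 := BoxMyc.lower_bound hn lo hi P
    rw [hSc, hl] at h2
    exact h2
  have hub2 : 1 ≤ l → B ≤ k - l + (l / 2 + 1) := by
    intro hl1
    have h3 := BoxMyc.rep2 hn hl hl1
    rw [hSc] at h3
    exact Nat.sInf_le h3
  rcases Nat.eq_zero_or_pos l with hl0 | hl1
  · subst hl0
    refine ⟨by omega, by omega, fun _ => by omega⟩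
  · have h4 := hub2 hl1
    refine ⟨by omega, by omega, ?_⟩
    rintro (hodd | hzero)
    · have h5 : l % 2 = 1 := Nat.odd_iff.mp hodd
      omega
    · omega
end

section
/- For any graph G, the chromatic number of the Mycielski graph satisfies χ(M_2(G)) = χ(G) + 1. -/
open SimpleGraph

lemma myc_colorable_succ {V : Type*} (G : SimpleGraph V) {n : ℕ} (h : G.Colorable n) :
    (genMycielski G 2).Colorable (n + 1) := by
  obtain ⟨c⟩ := h
  refine ⟨SimpleGraph.Coloring.mk
    (fun x => match x with
      | none => Fin.last n
      | some (v, _) => (c v).castSucc) ?_⟩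
  intro a b hadj
  rw [genMycielski, SimpleGraph.fromRel_adj] at hadj
  obtain ⟨hne, hr⟩ := hadj
  match a, b with
  | none, none => exact absurd rfl hne
  | none, some (v, j) =>
    simp only []
    exact fun h => (Fin.castSucc_lt_last (c v)).ne' h
  | some (v, j), none =>
    simp only []
    exact fun h => (Fin.castSucc_lt_last (c v)).ne h
  | some (u, i), some (v, j) =>
    have hadj : G.Adj u v := by
      rcases hr with (⟨_, _, h⟩ | ⟨_, h⟩) | (⟨_, _, h⟩ | ⟨_, h⟩) <;>
        first | exact h | exact h.symm
    simp only []
    intro h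
    exact c.valid hadj (Fin.castSucc_injective n h)

lemma myc_colorable_rev {V : Type*} (G : SimpleGraph V) {n : ℕ}
    (h : (genMycielski G 2).Colorable (n + 1)) : G.Colorable n := by
  obtain ⟨c⟩ := h
  set M := genMycielski G 2
  set a : Fin (n + 1) := c none with ha
  have hadj_top : ∀ v : V, M.Adj (some (v, 1)) none := by
    intro v
    show (SimpleGraph.fromRel _).Adj _ _
    rw [SimpleGraph.fromRel_adj]
    exact ⟨by simp, Or.inl rfl⟩
  have hadj00 : ∀ u v : V, G.Adj u v → M.Adj (some (u, 0)) (some (v, 0)) := by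
    intro u v huv
    show (SimpleGraph.fromRel _).Adj _ _
    rw [SimpleGraph.fromRel_adj]
    exact ⟨by simp [huv.ne], Or.inl (Or.inl ⟨rfl, rfl, huv⟩)⟩
  have hadj01 : ∀ u v : V, G.Adj u v → M.Adj (some (u, 0)) (some (v, 1)) := by
    intro u v huv
    show (SimpleGraph.fromRel _).Adj _ _
    rw [SimpleGraph.fromRel_adj]
    exact ⟨by simp, Or.inl (Or.inr ⟨rfl, huv⟩)⟩
  have hne1 : ∀ v : V, c (some (v, 1)) ≠ a := fun v => c.valid (hadj_top v)
  have key : G.Coloring {x : Fin (n + 1) // x ≠ a} := by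
    refine SimpleGraph.Coloring.mk
      (fun v => if h0 : c (some (v, 0)) = a then ⟨c (some (v, 1)), hne1 v⟩
        else ⟨c (some (v, 0)), h0⟩) ?_
    intro u v huv hcol
    have h00 : c (some (u, 0)) ≠ c (some (v, 0)) := c.valid (hadj00 u v huv)
    by_cases hu : c (some (u, 0)) = a <;> by_cases hv : c (some (v, 0)) = a <;>
      simp only [hu, hv, dif_pos, dif_neg, not_false_iff, Subtype.mk.injEq] at hcol
    · exact h00 (hu.trans hv.symm)
    · exact c.valid (hadj01 v u huv.symm) hcol.symm
    · exact c.valid (hadj01 u v huv) hcol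
    · exact h00 hcol
  have hcard : Fintype.card {x : Fin (n + 1) // x ≠ a} = n := by
    simp [Fintype.card_subtype_compl]
  exact hcard ▸ key.colorable

/-- Mycielski: `χ(M₂(G)) = χ(G) + 1`. -/
theorem chromaticNumber_mycielski {V : Type*} [Fintype V] (G : SimpleGraph V) :
    (genMycielski G 2).chromaticNumber = G.chromaticNumber + 1 := by
  classical
  set M := genMycielski G 2 with hM
  have hGtop : G.chromaticNumber ≠ ⊤ :=
    chromaticNumber_ne_top_iff_exists.mpr ⟨_, G.colorable_of_fintype⟩
  have hMtop : M.chromaticNumber ≠ ⊤ :=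
    chromaticNumber_ne_top_iff_exists.mpr ⟨_, M.colorable_of_fintype⟩
  set m : ℕ := G.chromaticNumber.toNat with hm
  set k : ℕ := M.chromaticNumber.toNat with hk
  have hGm : G.chromaticNumber = (m : ℕ∞) := (ENat.coe_toNat hGtop).symm
  have hMk : M.chromaticNumber = (k : ℕ∞) := (ENat.coe_toNat hMtop).symm
  have hGcol : G.Colorable m := G.colorable_chromaticNumber_of_fintype
  have hMcol : M.Colorable k := M.colorable_chromaticNumber_of_fintype
  have hk_pos : 1 ≤ k := by
    rcases Nat.eq_zero_or_pos k with h0 | h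
    · exfalso
      obtain ⟨cM⟩ := hMcol
      rw [h0] at cM
      exact (cM none).elim0
    · exact h
  have hle : M.chromaticNumber ≤ (m + 1 : ℕ) :=
    (myc_colorable_succ G hGcol).chromaticNumber_le
  have hge : (m : ℕ) + 1 ≤ k := by
    have hks : k - 1 + 1 = k := by omega
    have : G.Colorable (k - 1) := myc_colorable_rev G (by rwa [hks])
    have h2 : G.chromaticNumber ≤ ((k - 1 : ℕ) : ℕ∞) := this.chromaticNumber_le
    rw [hGm, Nat.cast_le] at h2
    omega
  rw [hMk, hGm]
  have : ((m : ℕ∞) + 1) = ((m + 1 : ℕ) : ℕ∞) := by push_cast; ring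
  rw [this]
  rw [hMk] at hle
  exact le_antisymm hle (by exact_mod_cast hge)
end
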